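/- arXiv:1503.05168 — 6 statements merged into one kernel-verified Lean document; each statement's English description precedes it below -/
import Mathlib

section
/- Consider the controlled system with an admissible control α and its trajectory ξ on [0,T]. If ξ̄(0) > 0, then ξ̄(t) ≥ e^{−Mt/N} ξ̄(0) > 0 for every t ∈ [0,T]. Moreover, for any τ ∈ [0,T] and any index i: if ξ_i(τ) ≥ 0 then ξ_i(t) ≥ 0 for all t ∈ [τ,T], and if ξ_i(τ) > 0 then ξ_i(t) > 0 for all t ∈ [τ,T]. -/
open MeasureTheory Real

noncomputable section

/-- An admissible control: each component is measurable, on `[0,T]` the components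
indexed by the agents `1,…,N` take values in `[0,1]`, and their total is at most `M`. -/
def IsAdmissible (N : ℕ) (T M : ℝ) (α : ℝ → ℕ → ℝ) : Prop :=
  (∀ i, Measurable fun t => α t i) ∧
  (∀ t ∈ Set.Icc (0 : ℝ) T, ∀ i ∈ Finset.Icc 1 N, 0 ≤ α t i ∧ α t i ≤ 1) ∧
  (∀ t ∈ Set.Icc (0 : ℝ) T, ∑ i ∈ Finset.Icc 1 N, α t i ≤ M)

/-- The mean `ξ̄(s) = (1/N) ∑_{j=1}^N ξ_j(s)` of the state. -/
def xbar (N : ℕ) (ξ : ℝ → ℕ → ℝ) (s : ℝ) : ℝ :=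
  (N : ℝ)⁻¹ * ∑ j ∈ Finset.Icc 1 N, ξ s j

/-- The trajectory of a control `α` with initial state `ξ0`: a continuous solution of
`ξ_i(t) = ξ⁰_i + ∫_0^t (−ξ_i(s) + (1 − α_i(s)) ξ̄(s)) ds` on `[0,T]`. -/
def IsTrajectory (N : ℕ) (T : ℝ) (α : ℝ → ℕ → ℝ) (ξ0 : ℕ → ℝ) (ξ : ℝ → ℕ → ℝ) : Prop :=
  (∀ i, ContinuousOn (fun t => ξ t i) (Set.Icc 0 T)) ∧
  (∀ t ∈ Set.Icc (0 : ℝ) T, ∀ i ∈ Finset.Icc 1 N,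
    ξ t i = ξ0 i + ∫ s in (0 : ℝ)..t, (-(ξ s i) + (1 - α s i) * xbar N ξ s))

/-- If `f` is continuous, `f a ≥ 0`, and `f t ≥ f s - K ∫_s^t max(f,0)` for
`a ≤ s ≤ t ≤ b`, then `f ≥ 0` on `[a,b]`. -/
lemma nonneg_of_integral_ineq {f : ℝ → ℝ} {a b K : ℝ}
    (hf : Continuous f) (ha : 0 ≤ f a)
    (hineq : ∀ s t, a ≤ s → s ≤ t → t ≤ b →
      f s - K * ∫ x in s..t, max (f x) 0 ≤ f t) :
    ∀ t ∈ Set.Icc a b, 0 ≤ f t := by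
  intro t₀ ht₀
  by_contra h
  push_neg at h
  set S : Set ℝ := Set.Icc a t₀ ∩ {t | 0 ≤ f t} with hSdef
  have hSne : a ∈ S := ⟨⟨le_refl a, ht₀.1⟩, ha⟩
  have hSclosed : IsClosed S :=
    isClosed_Icc.inter (isClosed_le continuous_const hf)
  have hSbdd : BddAbove S := ⟨t₀, fun x hx => hx.1.2⟩
  set c := sSup S with hc
  have hcS : c ∈ S := hSclosed.csSup_mem ⟨a, hSne⟩ hSbdd
  have hac : a ≤ c := hcS.1.1
  have hct : c ≤ t₀ := hcS.1.2
  have hcne : c ≠ t₀ := by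
    intro hEq
    exact absurd hcS.2 (by rw [hEq]; exact not_le.mpr h)
  have hclt : c < t₀ := lt_of_le_of_ne hct hcne
  have hneg : ∀ x ∈ Set.Ioc c t₀, f x ≤ 0 := by
    intro x hx
    by_contra hfx
    push_neg at hfx
    have hxS : x ∈ S := ⟨⟨hac.trans hx.1.le, hx.2⟩, hfx.le⟩
    exact absurd (le_csSup hSbdd hxS) (not_le.mpr hx.1)
  have hIcc_le : ∀ x ∈ Set.Icc c t₀, f x ≤ 0 := by
    have hsub : Set.Icc c t₀ ⊆ {x | f x ≤ 0} := by
      rw [← closure_Ioc hcne]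
      exact (isClosed_le hf continuous_const).closure_subset_iff.2 hneg
    exact fun x hx => hsub hx
  have hzero : ∫ x in c..t₀, max (f x) 0 = 0 := by
    rw [intervalIntegral.integral_congr (g := fun _ => (0:ℝ))
      (fun x hx => by
        rw [Set.uIcc_of_le hct] at hx
        exact max_eq_right (hIcc_le x hx))]
    simp
  have := hineq c t₀ hac hct ht₀.2
  rw [hzero] at this
  simp at this
  have : (0:ℝ) ≤ f t₀ := le_trans hcS.2 this
  exact absurd this (not_le.mpr h)

lemma gronwall_lower_cont {f : ℝ → ℝ} {a b K : ℝ} (hK : 0 ≤ K)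
    (hf : Continuous f) (ha : 0 ≤ f a)
    (hineq : ∀ s t, a ≤ s → s ≤ t → t ≤ b →
      f s - K * ∫ x in s..t, max (f x) 0 ≤ f t) :
    ∀ t ∈ Set.Icc a b, f a * Real.exp (-(K * (t - a))) ≤ f t := by
  have hpos := nonneg_of_integral_ineq hf ha hineq
  -- rewrite max(f,0) = f on subintervals
  have hineq' : ∀ s t, a ≤ s → s ≤ t → t ≤ b →
      f s - K * ∫ x in s..t, f x ≤ f t := by
    intro s t hs hst htb
    have hcongr : ∫ x in s..t, max (f x) 0 = ∫ x in s..t, f x := by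
      apply intervalIntegral.integral_congr
      intro x hx
      rw [Set.uIcc_of_le hst] at hx
      exact max_eq_left (hpos x ⟨hs.trans hx.1, hx.2.trans htb⟩)
    have := hineq s t hs hst htb
    rwa [hcongr] at this
  rcases hK.eq_or_lt with hK0 | hKpos
  · -- K = 0 : f is monotone
    intro t ht
    have := hineq' a t le_rfl ht.1 ht.2
    rw [← hK0] at this
    simp at this
    calc f a * Real.exp (-(K * (t - a))) ≤ f a * 1 := by
          apply mul_le_mul_of_nonneg_left _ ha
          calc Real.exp (-(K * (t - a))) ≤ Real.exp 0 := by
                apply Real.exp_le_exp.2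
                rw [← hK0]; simp
            _ = 1 := Real.exp_zero
      _ = f a := mul_one _
      _ ≤ f t := this
  · -- K > 0
    set F : ℝ → ℝ := fun t => ∫ x in a..t, f x with hFdef
    have hFderiv : ∀ t : ℝ, HasDerivAt F (f t) t := fun t =>
      intervalIntegral.integral_hasDerivAt_right (hf.intervalIntegrable a t)
        (hf.stronglyMeasurable.stronglyMeasurableAtFilter) hf.continuousAt
    have hFcont : Continuous F := by
      rw [continuous_iff_continuousAt]
      exact fun t => (hFderiv t).continuousAt
    set G : ℝ → ℝ := fun t => f t + K * F t with hGdef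
    have hGcont : Continuous G := hf.add (continuous_const.mul hFcont)
    have hGmono : ∀ s t, a ≤ s → s ≤ t → t ≤ b → G s ≤ G t := by
      intro s t hs hst htb
      have hadd : (∫ x in a..s, f x) + (∫ x in s..t, f x) = ∫ x in a..t, f x :=
        intervalIntegral.integral_add_adjacent_intervals
          (hf.intervalIntegrable a s) (hf.intervalIntegrable s t)
      have h1 := hineq' s t hs hst htb
      have hFst : F t - F s = ∫ x in s..t, f x := by
        simp only [hFdef]; linarith
      simp only [hGdef]
      nlinarith [h1, hFst]
    intro t₀ ht₀
    have hat₀ : a ≤ t₀ := ht₀.1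
    -- key identity
    have hid : ∫ x in a..t₀, Real.exp (K * x) * G x
        = Real.exp (K * t₀) * F t₀ - Real.exp (K * a) * F a := by
      apply intervalIntegral.integral_eq_sub_of_hasDerivAt
        (f := fun x => Real.exp (K * x) * F x)
      · intro x _
        have h1 : HasDerivAt (fun x => Real.exp (K * x)) (K * Real.exp (K * x)) x := by
          have := (Real.hasDerivAt_exp (K * x)).comp x ((hasDerivAt_id x).const_mul K)
          exact this.congr_deriv (by ring)
        have h2 := h1.mul (hFderiv x)
        refine h2.congr_deriv ?_
        simp only [hGdef]
        ring
      · exact (continuous_exp.comp (continuous_const.mul continuous_id)).mul hGcont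
          |>.intervalIntegrable a t₀
    have hFa : F a = 0 := by simp [hFdef]
    -- bound the integral by G t₀
    have hbound : ∫ x in a..t₀, Real.exp (K * x) * G x
        ≤ ∫ x in a..t₀, Real.exp (K * x) * G t₀ := by
      apply intervalIntegral.integral_mono_on hat₀
      · exact ((continuous_exp.comp (continuous_const.mul continuous_id)).mul hGcont
          |>.intervalIntegrable a t₀)
      · exact ((continuous_exp.comp (continuous_const.mul continuous_id)).mul
          continuous_const |>.intervalIntegrable a t₀)
      · intro x hx
        exact mul_le_mul_of_nonneg_left (hGmono x t₀ hx.1 hx.2 ht₀.2) (Real.exp_pos _).le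
    -- compute ∫ exp(K x)
    have hexpint : ∫ x in a..t₀, Real.exp (K * x)
        = (Real.exp (K * t₀) - Real.exp (K * a)) / K := by
      have : ∫ x in a..t₀, Real.exp (K * x)
          = (Real.exp (K * t₀) / K) - (Real.exp (K * a) / K) := by
        apply intervalIntegral.integral_eq_sub_of_hasDerivAt
          (f := fun x => Real.exp (K * x) / K)
        · intro x _
          have h1 : HasDerivAt (fun x => Real.exp (K * x)) (K * Real.exp (K * x)) x := by
            have := (Real.hasDerivAt_exp (K * x)).comp x ((hasDerivAt_id x).const_mul K)
            exact this.congr_deriv (by ring)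
          have := h1.div_const K
          refine this.congr_deriv ?_
          field_simp
        · exact (continuous_exp.comp (continuous_const.mul continuous_id)).intervalIntegrable a t₀
      rw [this]; ring
    have hsum : ∫ x in a..t₀, Real.exp (K * x) * G t₀
        = (Real.exp (K * t₀) - Real.exp (K * a)) / K * G t₀ := by
      rw [← hexpint, ← intervalIntegral.integral_mul_const]
    -- put it together
    have hkey : Real.exp (K * t₀) * F t₀
        ≤ (Real.exp (K * t₀) - Real.exp (K * a)) / K * G t₀ := by
      rw [hid, hFa, hsum] at hbound
      simpa using hbound
    have h1 : K * (Real.exp (K * t₀) * F t₀)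
        ≤ (Real.exp (K * t₀) - Real.exp (K * a)) * G t₀ := by
      have h2 := mul_le_mul_of_nonneg_right hkey hKpos.le
      calc K * (Real.exp (K * t₀) * F t₀)
          = Real.exp (K * t₀) * F t₀ * K := by ring
        _ ≤ (Real.exp (K * t₀) - Real.exp (K * a)) / K * G t₀ * K := h2
        _ = (Real.exp (K * t₀) - Real.exp (K * a)) * G t₀ := by
            field_simp
    have hGa : G a = f a := by simp [hGdef, hFa]
    have hGat : G a ≤ G t₀ := hGmono a t₀ le_rfl hat₀ ht₀.2
    have hft : f t₀ = G t₀ - K * F t₀ := by simp only [hGdef]; ring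
    have hPQ : Real.exp (K * a) = Real.exp (K * t₀) * Real.exp (-(K * (t₀ - a))) := by
      rw [← Real.exp_add]; ring_nf
    have hP : (0:ℝ) < Real.exp (K * t₀) := Real.exp_pos _
    have hE : (0:ℝ) < Real.exp (-(K * (t₀ - a))) := Real.exp_pos _
    have hfaG : f a ≤ G t₀ := hGa ▸ hGat
    nlinarith [h1, mul_pos hP hE, mul_nonneg (mul_pos hP hE).le (sub_nonneg.2 hfaG), hP, hE]

/-- Grönwall lower bound for `ContinuousOn` functions. -/
lemma gronwall_lower {f : ℝ → ℝ} {a b K : ℝ} (hK : 0 ≤ K) (hab : a ≤ b)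
    (hf : ContinuousOn f (Set.Icc a b)) (ha : 0 ≤ f a)
    (hineq : ∀ s t, a ≤ s → s ≤ t → t ≤ b →
      f s - K * ∫ x in s..t, max (f x) 0 ≤ f t) :
    ∀ t ∈ Set.Icc a b, f a * Real.exp (-(K * (t - a))) ≤ f t := by
  set g : ℝ → ℝ := Set.IccExtend hab (fun x : Set.Icc a b => f x) with hgdef
  have hgeq : ∀ x ∈ Set.Icc a b, g x = f x := by
    intro x hx
    simp only [hgdef, Set.IccExtend_of_mem hab _ hx]
  have hgcont : Continuous g := Continuous.Icc_extend' (by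
    exact continuousOn_iff_continuous_restrict.1 hf)
  have hga : g a = f a := hgeq a ⟨le_rfl, hab⟩
  have hineq' : ∀ s t, a ≤ s → s ≤ t → t ≤ b →
      g s - K * ∫ x in s..t, max (g x) 0 ≤ g t := by
    intro s t hs hst htb
    have hsI : s ∈ Set.Icc a b := ⟨hs, hst.trans htb⟩
    have htI : t ∈ Set.Icc a b := ⟨hs.trans hst, htb⟩
    have hcongr : ∫ x in s..t, max (g x) 0 = ∫ x in s..t, max (f x) 0 := by
      apply intervalIntegral.integral_congr
      intro x hx
      rw [Set.uIcc_of_le hst] at hx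
      simp only [hgeq x ⟨hs.trans hx.1, hx.2.trans htb⟩]
    rw [hcongr, hgeq s hsI, hgeq t htI]
    exact hineq s t hs hst htb
  intro t ht
  have := gronwall_lower_cont hK hgcont (hga ▸ ha) hineq' t ht
  rwa [hga, hgeq t ht] at this

/-- If `ξ̄(0) > 0`, then `ξ̄(t) ≥ e^{−Mt/N} ξ̄(0) > 0` on `[0,T]`; moreover nonnegativity
(resp. positivity) of a component `ξ_i` at a time `τ` propagates to all of `[τ,T]`. -/
theorem positivity_propagation
    (N : ℕ) (hN : 1 ≤ N) (T M : ℝ) (hT : 0 < T) (hM : 0 < M)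
    (α : ℝ → ℕ → ℝ) (ξ0 : ℕ → ℝ) (ξ : ℝ → ℕ → ℝ)
    (hα : IsAdmissible N T M α) (hξ : IsTrajectory N T α ξ0 ξ)
    (hbar0 : 0 < xbar N ξ 0) :
    (∀ t ∈ Set.Icc (0 : ℝ) T,
      Real.exp (-M * t / N) * xbar N ξ 0 ≤ xbar N ξ t ∧
      0 < Real.exp (-M * t / N) * xbar N ξ 0) ∧
    (∀ τ ∈ Set.Icc (0 : ℝ) T, ∀ i ∈ Finset.Icc 1 N,
      (0 ≤ ξ τ i → ∀ t ∈ Set.Icc τ T, 0 ≤ ξ t i) ∧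
      (0 < ξ τ i → ∀ t ∈ Set.Icc τ T, 0 < ξ t i)) := by
  obtain ⟨hαmeas, hα01, hαsum⟩ := hα
  obtain ⟨hξcont, hξeq⟩ := hξ
  have hT0 : (0:ℝ) ≤ T := hT.le
  have h0I : (0:ℝ) ∈ Set.Icc (0:ℝ) T := ⟨le_rfl, hT0⟩
  have hNpos : (0:ℝ) < (N:ℝ) := by exact_mod_cast Nat.lt_of_lt_of_le Nat.zero_lt_one hN
  -- continuity of the mean
  have hxcont : ContinuousOn (xbar N ξ) (Set.Icc 0 T) := by
    unfold xbar
    exact continuousOn_const.mul (continuousOn_finset_sum _ (fun j _ => hξcont j))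
  obtain ⟨Cx, hCx⟩ := isCompact_Icc.exists_bound_of_continuousOn hxcont
  -- integrability of the velocity field
  have hBint : ∀ i ∈ Finset.Icc 1 N, ∀ s t : ℝ, s ∈ Set.Icc 0 T → t ∈ Set.Icc 0 T →
      IntervalIntegrable (fun x => -(ξ x i) + (1 - α x i) * xbar N ξ x) volume s t := by
    intro i hi s t hs ht
    obtain ⟨Ci, hCi⟩ := isCompact_Icc.exists_bound_of_continuousOn (hξcont i)
    rw [intervalIntegrable_iff]
    have hsub : Set.uIoc s t ⊆ Set.Icc 0 T :=
      Set.uIoc_subset_uIcc.trans (Set.uIcc_subset_Icc hs ht)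
    apply Integrable.mono' (g := fun _ => |Ci| + |Cx|)
    · exact integrableOn_const measure_Ioc_lt_top.ne
    · have hmξ : AEStronglyMeasurable (fun x => ξ x i) (volume.restrict (Set.uIoc s t)) :=
        ((hξcont i).mono hsub).aestronglyMeasurable measurableSet_uIoc
      have hmx : AEStronglyMeasurable (xbar N ξ) (volume.restrict (Set.uIoc s t)) :=
        (hxcont.mono hsub).aestronglyMeasurable measurableSet_uIoc
      have hmα : AEStronglyMeasurable (fun x => α x i)
          (volume.restrict (Set.uIoc s t)) := (hαmeas i).aestronglyMeasurable
      exact hmξ.neg.add ((aestronglyMeasurable_const.sub hmα).mul hmx)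
    · filter_upwards [ae_restrict_mem measurableSet_uIoc] with x hx
      have hxI := hsub hx
      have h1 := hCi x hxI
      have h2 := hCx x hxI
      have h3 := hα01 x hxI i hi
      rw [Real.norm_eq_abs] at h1 h2 ⊢
      have ha1 : |1 - α x i| ≤ 1 := abs_le.2 ⟨by linarith [h3.2], by linarith [h3.1]⟩
      calc |(-(ξ x i) + (1 - α x i) * xbar N ξ x)|
          ≤ |(-(ξ x i))| + |(1 - α x i) * xbar N ξ x| := abs_add_le _ _
        _ = |ξ x i| + |1 - α x i| * |xbar N ξ x| := by rw [abs_neg, abs_mul]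
        _ ≤ |Ci| + 1 * |Cx| := by
            apply add_le_add (h1.trans (le_abs_self Ci))
            exact mul_le_mul ha1 (h2.trans (le_abs_self Cx)) (abs_nonneg _) zero_le_one
        _ = |Ci| + |Cx| := by ring
  -- increments as interval integrals
  have hdiff : ∀ i ∈ Finset.Icc 1 N, ∀ s ∈ Set.Icc (0:ℝ) T, ∀ t ∈ Set.Icc (0:ℝ) T,
      ξ t i - ξ s i = ∫ x in s..t, (-(ξ x i) + (1 - α x i) * xbar N ξ x) := by
    intro i hi s hs t ht
    have h1 := hξeq s hs i hi
    have h2 := hξeq t ht i hi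
    have h3 := intervalIntegral.integral_add_adjacent_intervals
      (hBint i hi 0 s h0I hs) (hBint i hi s t hs ht)
    linarith
  -- pointwise sum identity
  have hsumeq : ∀ x : ℝ, ∑ i ∈ Finset.Icc 1 N, (-(ξ x i) + (1 - α x i) * xbar N ξ x)
      = (-(∑ i ∈ Finset.Icc 1 N, α x i)) * xbar N ξ x := by
    intro x
    have hcard : ((Finset.Icc 1 N).card : ℝ) = (N:ℝ) := by
      rw [Nat.card_Icc]; simp
    have hxb : ∑ j ∈ Finset.Icc 1 N, ξ x j = (N:ℝ) * xbar N ξ x := by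
      rw [xbar]; field_simp
    calc ∑ i ∈ Finset.Icc 1 N, (-(ξ x i) + (1 - α x i) * xbar N ξ x)
        = -(∑ i ∈ Finset.Icc 1 N, ξ x i)
          + (∑ i ∈ Finset.Icc 1 N, (1 - α x i)) * xbar N ξ x := by
          rw [Finset.sum_add_distrib, Finset.sum_neg_distrib, Finset.sum_mul]
      _ = -((N:ℝ) * xbar N ξ x)
          + ((N:ℝ) - ∑ i ∈ Finset.Icc 1 N, α x i) * xbar N ξ x := by
          rw [hxb, Finset.sum_sub_distrib, Finset.sum_const, nsmul_eq_mul, mul_one, hcard]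
      _ = (-(∑ i ∈ Finset.Icc 1 N, α x i)) * xbar N ξ x := by ring
  -- Gronwall hypothesis for the mean
  have hKM : (0:ℝ) ≤ M / N := by positivity
  have hmean_ineq : ∀ s t, 0 ≤ s → s ≤ t → t ≤ T →
      xbar N ξ s - (M/(N:ℝ)) * ∫ x in s..t, max (xbar N ξ x) 0 ≤ xbar N ξ t := by
    intro s t hs hst htT
    have hsI : s ∈ Set.Icc (0:ℝ) T := ⟨hs, hst.trans htT⟩
    have htI : t ∈ Set.Icc (0:ℝ) T := ⟨hs.trans hst, htT⟩
    have hsplit : xbar N ξ t - xbar N ξ s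
        = (N:ℝ)⁻¹ * ∫ x in s..t, (-(∑ i ∈ Finset.Icc 1 N, α x i)) * xbar N ξ x := by
      calc xbar N ξ t - xbar N ξ s
          = (N:ℝ)⁻¹ * ∑ i ∈ Finset.Icc 1 N, (ξ t i - ξ s i) := by
            rw [xbar, xbar, Finset.sum_sub_distrib]; ring
        _ = (N:ℝ)⁻¹ * ∑ i ∈ Finset.Icc 1 N,
              ∫ x in s..t, (-(ξ x i) + (1 - α x i) * xbar N ξ x) := by
            congr 1
            exact Finset.sum_congr rfl (fun i hi => hdiff i hi s hsI t htI)
        _ = (N:ℝ)⁻¹ * ∫ x in s..t,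
              ∑ i ∈ Finset.Icc 1 N, (-(ξ x i) + (1 - α x i) * xbar N ξ x) := by
            rw [intervalIntegral.integral_finset_sum
              (fun i hi => hBint i hi s t hsI htI)]
        _ = (N:ℝ)⁻¹ * ∫ x in s..t, (-(∑ i ∈ Finset.Icc 1 N, α x i)) * xbar N ξ x := by
            congr 1
            exact intervalIntegral.integral_congr (fun x _ => hsumeq x)
    have hInt1 : IntervalIntegrable
        (fun x => (-(∑ i ∈ Finset.Icc 1 N, α x i)) * xbar N ξ x) volume s t := by
      have hsum : IntervalIntegrable
          (fun x => ∑ i ∈ Finset.Icc 1 N, (-(ξ x i) + (1 - α x i) * xbar N ξ x))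
          volume s t := by
        rw [intervalIntegrable_iff]
        apply integrable_finset_sum
        intro i hi
        exact intervalIntegrable_iff.1 (hBint i hi s t hsI htI)
      have heq : (fun x => ∑ i ∈ Finset.Icc 1 N, (-(ξ x i) + (1 - α x i) * xbar N ξ x))
          = fun x => (-(∑ i ∈ Finset.Icc 1 N, α x i)) * xbar N ξ x := funext hsumeq
      rwa [heq] at hsum
    have hsubI : Set.uIcc s t ⊆ Set.Icc (0:ℝ) T := Set.uIcc_subset_Icc hsI htI
    have hInt2 : IntervalIntegrable
        (fun x => -M * max (xbar N ξ x) 0) volume s t := by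
      apply ContinuousOn.intervalIntegrable
      exact continuousOn_const.mul
        (fun x hx => ((hxcont.mono hsubI) x hx).max continuousWithinAt_const)
    have hmono : ∫ x in s..t, -M * max (xbar N ξ x) 0
        ≤ ∫ x in s..t, (-(∑ i ∈ Finset.Icc 1 N, α x i)) * xbar N ξ x := by
      apply intervalIntegral.integral_mono_on hst hInt2 hInt1
      intro x hx
      have hxI : x ∈ Set.Icc (0:ℝ) T := ⟨hs.trans hx.1, hx.2.trans htT⟩
      have hsle := hαsum x hxI
      have hsnn : 0 ≤ ∑ i ∈ Finset.Icc 1 N, α x i :=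
        Finset.sum_nonneg (fun i hi => (hα01 x hxI i hi).1)
      rcases le_or_gt 0 (xbar N ξ x) with hxb | hxb
      · rw [max_eq_left hxb]
        nlinarith
      · rw [max_eq_right hxb.le]
        nlinarith
    have hL : ∫ x in s..t, -M * max (xbar N ξ x) 0
        = -M * ∫ x in s..t, max (xbar N ξ x) 0 :=
      intervalIntegral.integral_const_mul _ _
    have hNinv : (0:ℝ) < (N:ℝ)⁻¹ := by positivity
    have hfinal := mul_le_mul_of_nonneg_left hmono hNinv.le
    rw [hL] at hfinal
    have hring : (N:ℝ)⁻¹ * (-M * ∫ x in s..t, max (xbar N ξ x) 0)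
        = -(M/(N:ℝ) * ∫ x in s..t, max (xbar N ξ x) 0) := by ring
    rw [hring] at hfinal
    linarith [hsplit, hfinal]
  have hmean := gronwall_lower (f := xbar N ξ) (a := 0) (b := T) (K := M/(N:ℝ))
    hKM hT0 hxcont hbar0.le hmean_ineq
  have hmean' : ∀ t ∈ Set.Icc (0:ℝ) T,
      Real.exp (-M * t / N) * xbar N ξ 0 ≤ xbar N ξ t := by
    intro t ht
    have := hmean t ht
    have heq : xbar N ξ 0 * Real.exp (-(M/(N:ℝ) * (t - 0)))
        = Real.exp (-M * t / N) * xbar N ξ 0 := by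
      rw [mul_comm]
      congr 1
      ring
    rwa [heq] at this
  have hbarpos : ∀ x ∈ Set.Icc (0:ℝ) T, 0 < xbar N ξ x := by
    intro x hx
    exact lt_of_lt_of_le (mul_pos (Real.exp_pos _) hbar0) (hmean' x hx)
  constructor
  · exact fun t ht => ⟨hmean' t ht, mul_pos (Real.exp_pos _) hbar0⟩
  · intro τ hτ i hi
    have hτT : τ ≤ T := hτ.2
    have hcompi : ∀ s t, τ ≤ s → s ≤ t → t ≤ T →
        ξ s i - 1 * ∫ x in s..t, max (ξ x i) 0 ≤ ξ t i := by
      intro s t hs hst htT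
      have hsI : s ∈ Set.Icc (0:ℝ) T := ⟨hτ.1.trans hs, hst.trans htT⟩
      have htI : t ∈ Set.Icc (0:ℝ) T := ⟨hτ.1.trans (hs.trans hst), htT⟩
      have hd := hdiff i hi s hsI t htI
      have hsubI : Set.uIcc s t ⊆ Set.Icc (0:ℝ) T := Set.uIcc_subset_Icc hsI htI
      have hIm : IntervalIntegrable (fun x => -(max (ξ x i) 0)) volume s t := by
        apply ContinuousOn.intervalIntegrable
        apply ContinuousOn.neg
        intro x hx
        exact (((hξcont i).mono hsubI) x hx).max continuousWithinAt_const
      have hmono : ∫ x in s..t, -(max (ξ x i) 0)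
          ≤ ∫ x in s..t, (-(ξ x i) + (1 - α x i) * xbar N ξ x) := by
        apply intervalIntegral.integral_mono_on hst hIm (hBint i hi s t hsI htI)
        intro x hx
        have hxI : x ∈ Set.Icc (0:ℝ) T := ⟨hsI.1.trans hx.1, hx.2.trans htT⟩
        have h1 := (hα01 x hxI i hi).2
        have h2 := hbarpos x hxI
        have h3 : ξ x i ≤ max (ξ x i) 0 := le_max_left _ _
        nlinarith [mul_nonneg (sub_nonneg.2 h1) h2.le]
      have hIneg : ∫ x in s..t, -(max (ξ x i) 0)
          = -(∫ x in s..t, max (ξ x i) 0) := intervalIntegral.integral_neg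
      rw [hIneg] at hmono
      linarith
    have hcont' : ContinuousOn (fun t => ξ t i) (Set.Icc τ T) :=
      (hξcont i).mono (Set.Icc_subset_Icc hτ.1 le_rfl)
    constructor
    · intro h0 t ht
      have := gronwall_lower (f := fun t => ξ t i) (a := τ) (b := T) (K := 1)
        zero_le_one hτT hcont' h0 hcompi t ht
      have hnn : 0 ≤ ξ τ i * Real.exp (-(1 * (t - τ))) :=
        mul_nonneg h0 (Real.exp_pos _).le
      linarith
    · intro h0 t ht
      have := gronwall_lower (f := fun t => ξ t i) (a := τ) (b := T) (K := 1)
        zero_le_one hτT hcont' h0.le hcompi t ht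
      have hpp : 0 < ξ τ i * Real.exp (-(1 * (t - τ))) :=
        mul_pos h0 (Real.exp_pos _)
      linarith

end
end

section
/- Suppose v̄(0) ≠ 0 and set e = v̄(0)/‖v̄(0)‖. Then for every t ∈ [0,T], v̄(t) is a nonnegative scalar multiple of v̄(0) (in fact a positive multiple), and for every i the orthogonal component w_i(t) := v_i(t) − ⟨v_i(t), e⟩ e satisfies w_i(t) = e^{−t} w_i(0); in particular ‖w_i(t)‖ = e^{−t} ‖w_i(0)‖ decays exponentially, independently of the controls. -/
open MeasureTheory Real intervalIntegral

lemma gronwall_zero (f : ℝ → ℝ) (a b : ℝ) (hab : a ≤ b) (hf : ContinuousOn f (Set.Icc a b))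
    (h0 : ∀ t ∈ Set.Icc a b, 0 ≤ f t)
    (hle : ∀ t ∈ Set.Icc a b, f t ≤ ∫ s in a..t, f s) :
    ∀ t ∈ Set.Icc a b, f t = 0 := by
  obtain ⟨C, hC⟩ : ∃ C, ∀ t ∈ Set.Icc a b, f t ≤ C := by
    obtain ⟨C, hC⟩ := (isCompact_Icc.image_of_continuousOn hf).bddAbove
    exact ⟨C, fun t ht => hC ⟨t, ht, rfl⟩⟩
  have key : ∀ n : ℕ, ∀ t ∈ Set.Icc a b, f t ≤ C * ((t - a) ^ n / n.factorial) := by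
    intro n
    induction n with
    | zero =>
      intro t ht; simpa using hC t ht
    | succ n ih =>
      intro t ht
      have hta : a ≤ t := ht.1
      have hint : IntervalIntegrable f volume a t :=
        (hf.mono (Set.Icc_subset_Icc le_rfl ht.2)).intervalIntegrable_of_Icc hta
      have hint2 : IntervalIntegrable (fun s => C * ((s - a) ^ n / n.factorial)) volume a t :=
        (Continuous.intervalIntegrable (by continuity) a t)
      calc f t ≤ ∫ s in a..t, f s := hle t ht
        _ ≤ ∫ s in a..t, C * ((s - a) ^ n / n.factorial) := by
            apply integral_mono_on hta hint hint2
            intro s hs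
            exact ih s ⟨hs.1, hs.2.trans ht.2⟩
        _ = C * ((t - a) ^ (n + 1) / (n + 1).factorial) := by
            rw [intervalIntegral.integral_const_mul]
            have : ∫ s in a..t, ((s - a) ^ n / n.factorial) = (t-a)^(n+1)/(n+1).factorial := by
              rw [intervalIntegral.integral_div,
                intervalIntegral.integral_comp_sub_right (fun s => s^n) a, integral_pow]
              have hfac : (((n+1).factorial : ℕ) : ℝ) = (n+1) * n.factorial := by
                exact_mod_cast Nat.factorial_succ n
              have h1 : (n.factorial : ℝ) ≠ 0 := Nat.cast_ne_zero.mpr n.factorial_ne_zero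
              have h2 : (n : ℝ) + 1 ≠ 0 := by positivity
              rw [hfac]; field_simp; simp
            rw [this]
  intro t ht
  refine le_antisymm ?_ (h0 t ht)
  have : Filter.Tendsto (fun n : ℕ => C * ((t - a) ^ n / n.factorial)) Filter.atTop (nhds 0) := by
    simpa using (FloorSemiring.tendsto_pow_div_factorial_atTop (t - a)).const_mul C
  exact ge_of_tendsto this (Filter.Eventually.of_forall fun n => key n t ht)

lemma gronwall_zero' (f : ℝ → ℝ) (a b : ℝ) (hab : a ≤ b) (hf : ContinuousOn f (Set.Icc a b))
    (h0 : ∀ t ∈ Set.Icc a b, 0 ≤ f t)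
    (hle : ∀ t ∈ Set.Icc a b, f t ≤ ∫ s in t..b, f s) :
    ∀ t ∈ Set.Icc a b, f t = 0 := by
  have hmem : ∀ t ∈ Set.Icc a b, a + b - t ∈ Set.Icc a b := by
    intro t ht; constructor <;> [linarith [ht.2]; linarith [ht.1]]
  have := gronwall_zero (fun t => f (a + b - t)) a b hab
    (hf.comp (by fun_prop) (fun t ht => hmem t ht))
    (fun t ht => h0 _ (hmem t ht))
    (fun t ht => by
      have h1 : ∫ s in a..t, f (a + b - s) = ∫ s in (a+b-t)..b, f s := by
        rw [intervalIntegral.integral_comp_sub_left f (a+b)]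
        norm_num
      rw [h1]
      exact hle _ (hmem t ht))
  intro t ht
  have := this (a + b - t) (hmem t ht)
  simpa using this

open scoped RealInnerProductSpace

noncomputable section

lemma aux_int {F : Type*} [NormedAddCommGroup F] [NormedSpace ℝ F] {T : ℝ}
    (c : ℝ → ℝ) (hc : Measurable c) (hcb : ∀ s ∈ Set.Icc (0:ℝ) T, |c s| ≤ 1)
    (g : ℝ → F) (hg : ContinuousOn g (Set.Icc 0 T)) (t : ℝ) (ht : t ∈ Set.Icc (0:ℝ) T) :
    IntervalIntegrable (fun s => c s • g s) volume 0 t := by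
  rw [intervalIntegrable_iff', Set.uIcc_of_le ht.1]
  apply IntegrableOn.smul_continuousOn _ (hg.mono (Set.Icc_subset_Icc le_rfl ht.2)) isCompact_Icc
  apply Measure.integrableOn_of_bounded (M := 1) (by simp) hc.aestronglyMeasurable
  rw [ae_restrict_iff' measurableSet_Icc]
  filter_upwards with s hs
  simpa using hcb s (Set.Icc_subset_Icc le_rfl ht.2 hs)

/-- Along any admissible control, the mean velocity stays a positive multiple of `v̄(0)`,
and the component of each `v_i` orthogonal to `e = v̄(0)/‖v̄(0)‖` decays as `e^{−t}`,
independently of the controls. -/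
theorem orthogonal_component_decay
    (N d : ℕ) (hN : 1 ≤ N) (hd : 1 ≤ d) (T M : ℝ) (hT : 0 < T) (hM : 0 < M)
    (α : ℝ → ℕ → ℝ)
    (hmeas : ∀ i, Measurable fun t => α t i)
    (hrange : ∀ t ∈ Set.Icc (0 : ℝ) T, ∀ i ∈ Finset.Icc 1 N, 0 ≤ α t i ∧ α t i ≤ 1)
    (hsum : ∀ t ∈ Set.Icc (0 : ℝ) T, ∑ i ∈ Finset.Icc 1 N, α t i ≤ M)
    (v : ℝ → ℕ → EuclideanSpace ℝ (Fin d))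
    (hcont : ∀ i, ContinuousOn (fun t => v t i) (Set.Icc 0 T))
    (hv : ∀ t ∈ Set.Icc (0 : ℝ) T, ∀ i ∈ Finset.Icc 1 N,
      v t i = v 0 i + ∫ s in (0 : ℝ)..t,
        (-(v s i) + (1 - α s i) • ((N : ℝ)⁻¹ • ∑ j ∈ Finset.Icc 1 N, v s j)))
    (hv0 : ((N : ℝ)⁻¹ • ∑ j ∈ Finset.Icc 1 N, v 0 j) ≠ 0)
    (e : EuclideanSpace ℝ (Fin d))
    (he : e = ‖(N : ℝ)⁻¹ • ∑ j ∈ Finset.Icc 1 N, v 0 j‖⁻¹ •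
        ((N : ℝ)⁻¹ • ∑ j ∈ Finset.Icc 1 N, v 0 j)) :
    ∀ t ∈ Set.Icc (0 : ℝ) T,
      (∃ c : ℝ, 0 < c ∧
        ((N : ℝ)⁻¹ • ∑ j ∈ Finset.Icc 1 N, v t j) =
          c • ((N : ℝ)⁻¹ • ∑ j ∈ Finset.Icc 1 N, v 0 j)) ∧
      ∀ i ∈ Finset.Icc 1 N,
        (v t i - ⟪v t i, e⟫ • e) = Real.exp (-t) • (v 0 i - ⟪v 0 i, e⟫ • e) ∧
        ‖v t i - ⟪v t i, e⟫ • e‖ = Real.exp (-t) * ‖v 0 i - ⟪v 0 i, e⟫ • e‖ := by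
  classical
  have hN0 : (0:ℝ) < N := by exact_mod_cast Nat.lt_of_lt_of_le Nat.zero_lt_one hN
  have hNne : (N:ℝ) ≠ 0 := ne_of_gt hN0
  have hcard : (Finset.Icc 1 N).card = N := by rw [Nat.card_Icc]; omega
  set V : ℝ → EuclideanSpace ℝ (Fin d) := fun s => (N:ℝ)⁻¹ • ∑ j ∈ Finset.Icc 1 N, v s j with hVdef
  set A : ℝ → ℝ := fun s => (N:ℝ)⁻¹ * ∑ i ∈ Finset.Icc 1 N, α s i with hAdef
  have hVcont : ContinuousOn V (Set.Icc 0 T) := by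
    refine ContinuousOn.const_smul (g := fun s => ∑ j ∈ Finset.Icc 1 N, v s j) ?_ ((N:ℝ)⁻¹)
    exact continuousOn_finset_sum _ (fun j _ => hcont j)
  have hIccsub : ∀ t ∈ Set.Icc (0:ℝ) T, Set.Icc (0:ℝ) t ⊆ Set.Icc 0 T :=
    fun t ht => Set.Icc_subset_Icc le_rfl ht.2
  have hAmeas : Measurable A := by
    apply Measurable.const_mul
    exact Finset.measurable_sum _ (fun i _ => hmeas i)
  have hA01 : ∀ s ∈ Set.Icc (0:ℝ) T, 0 ≤ A s ∧ A s ≤ 1 := by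
    intro s hs
    have h1 : (0:ℝ) ≤ ∑ i ∈ Finset.Icc 1 N, α s i :=
      Finset.sum_nonneg (fun i hi => (hrange s hs i hi).1)
    have h2 : ∑ i ∈ Finset.Icc 1 N, α s i ≤ N := by
      calc ∑ i ∈ Finset.Icc 1 N, α s i ≤ ∑ _i ∈ Finset.Icc 1 N, (1:ℝ) :=
            Finset.sum_le_sum (fun i hi => (hrange s hs i hi).2)
        _ = N := by rw [Finset.sum_const, hcard]; simp
    constructor
    · positivity
    · rw [hAdef]
      calc (N:ℝ)⁻¹ * ∑ i ∈ Finset.Icc 1 N, α s i ≤ (N:ℝ)⁻¹ * N := by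
            apply mul_le_mul_of_nonneg_left h2 (by positivity)
        _ = 1 := inv_mul_cancel₀ hNne
  have hvint : ∀ t ∈ Set.Icc (0:ℝ) T, ∀ i, IntervalIntegrable (fun s => v s i) volume 0 t := by
    intro t ht i
    apply ContinuousOn.intervalIntegrable
    rw [Set.uIcc_of_le ht.1]
    exact (hcont i).mono (hIccsub t ht)
  have hsmulint : ∀ t ∈ Set.Icc (0:ℝ) T, ∀ i ∈ Finset.Icc 1 N,
      IntervalIntegrable (fun s => (1 - α s i) • V s) volume 0 t := by
    intro t ht i hi
    apply aux_int _ (measurable_const.sub (hmeas i)) _ V hVcont t ht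
    intro s hs
    have := hrange s hs i hi
    simp only [Pi.sub_apply]
    rw [abs_le]; constructor <;> linarith [this.1, this.2]
  have hFint : ∀ t ∈ Set.Icc (0:ℝ) T, ∀ i ∈ Finset.Icc 1 N,
      IntervalIntegrable (fun s => -(v s i) + (1 - α s i) • V s) volume 0 t :=
    fun t ht i hi => ((hvint t ht i).neg).add (hsmulint t ht i hi)
  have hAVint : ∀ t ∈ Set.Icc (0:ℝ) T, IntervalIntegrable (fun s => (-(A s)) • V s) volume 0 t := by
    intro t ht
    apply aux_int _ hAmeas.neg _ V hVcont t ht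
    intro s hs
    have := hA01 s hs
    simp only [Pi.neg_apply]
    rw [abs_neg, abs_le]; constructor <;> linarith [this.1, this.2]
  -- the mean satisfies V t = V 0 + ∫ (-A) • V
  have hVeq : ∀ t ∈ Set.Icc (0:ℝ) T, V t = V 0 + ∫ s in (0:ℝ)..t, (-(A s)) • V s := by
    intro t ht
    have h1 : V t = V 0 + (N:ℝ)⁻¹ • ∑ i ∈ Finset.Icc 1 N,
        ∫ s in (0:ℝ)..t, (-(v s i) + (1 - α s i) • V s) := by
      rw [hVdef]
      simp only
      rw [Finset.sum_congr rfl (fun i hi => hv t ht i hi), Finset.sum_add_distrib, smul_add]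
    rw [h1, ← intervalIntegral.integral_finset_sum (fun i hi => hFint t ht i hi),
      ← intervalIntegral.integral_smul]
    congr 1
    apply intervalIntegral.integral_congr
    intro s hs
    rw [Set.uIcc_of_le ht.1] at hs
    have hs' : s ∈ Set.Icc 0 T := hIccsub t ht hs
    simp only
    rw [Finset.sum_add_distrib, ← Finset.sum_smul, smul_add]
    have hsumneg : ∑ x ∈ Finset.Icc 1 N, -(v s x) = -(∑ x ∈ Finset.Icc 1 N, v s x) := by
      simp
    have hsum1 : ∑ i ∈ Finset.Icc 1 N, (1 - α s i) = (N:ℝ) - ∑ i ∈ Finset.Icc 1 N, α s i := by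
      rw [Finset.sum_sub_distrib, Finset.sum_const, hcard]; simp
    rw [hsumneg, hsum1, smul_neg, smul_smul]
    have hc1 : (N:ℝ)⁻¹ * ((N:ℝ) - ∑ i ∈ Finset.Icc 1 N, α s i) = 1 - A s := by
      rw [hAdef, mul_sub, inv_mul_cancel₀ hNne]
    rw [hc1]
    show -(V s) + (1 - A s) • V s = (-(A s)) • V s
    rw [sub_smul, one_smul, neg_smul]
    abel
  -- facts about e
  have hnV0 : (0:ℝ) < ‖V 0‖ := by
    rw [norm_pos_iff]; exact hv0
  have he1 : ‖e‖ = 1 := by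
    rw [he, norm_smul, norm_inv, norm_norm]
    exact inv_mul_cancel₀ (ne_of_gt hnV0)
  have hee : ⟪e, e⟫ = 1 := by
    rw [real_inner_self_eq_norm_mul_norm, he1]; ring
  have hV0e : V 0 = ‖V 0‖ • e := by
    rw [he, smul_smul, mul_inv_cancel₀ (ne_of_gt hnV0), one_smul]
  set P : EuclideanSpace ℝ (Fin d) →L[ℝ] EuclideanSpace ℝ (Fin d) :=
    ContinuousLinearMap.id ℝ _ - ((innerSL ℝ e).smulRight e) with hPdef
  have hPapp : ∀ x, P x = x - ⟪e, x⟫ • e := fun x => rfl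
  have hPe : P e = 0 := by rw [hPapp, hee, one_smul, sub_self]
  have hPV0 : P (V 0) = 0 := by rw [hV0e, P.map_smul, hPe, smul_zero]
  -- the orthogonal part of the mean vanishes
  have hueq : ∀ t ∈ Set.Icc (0:ℝ) T, P (V t) = ∫ s in (0:ℝ)..t, (-(A s)) • P (V s) := by
    intro t ht
    rw [hVeq t ht, map_add, hPV0, zero_add, ← P.intervalIntegral_comp_comm (hAVint t ht)]
    apply intervalIntegral.integral_congr
    intro s _
    simp
  have hucont : ContinuousOn (fun s => ‖P (V s)‖) (Set.Icc 0 T) :=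
    (P.continuous.comp_continuousOn hVcont).norm
  have hu : ∀ t ∈ Set.Icc (0:ℝ) T, P (V t) = 0 := by
    have hle : ∀ t ∈ Set.Icc (0:ℝ) T, ‖P (V t)‖ ≤ ∫ s in (0:ℝ)..t, ‖P (V s)‖ := by
      intro t ht
      rw [hueq t ht]
      have hb : ∀ᵐ s ∂(volume.restrict (Set.uIoc (0:ℝ) t)),
          ‖(-(A s)) • P (V s)‖ ≤ ‖P (V s)‖ := by
        rw [Set.uIoc_of_le ht.1, ae_restrict_iff' measurableSet_Ioc]
        filter_upwards with s hs
        have hs' : s ∈ Set.Icc 0 T := ⟨le_of_lt hs.1, hs.2.trans ht.2⟩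
        rw [norm_smul]
        have h01 := hA01 s hs'
        calc ‖-(A s)‖ * ‖P (V s)‖ ≤ 1 * ‖P (V s)‖ := by
              apply mul_le_mul_of_nonneg_right _ (norm_nonneg _)
              rw [Real.norm_eq_abs, abs_neg, abs_of_nonneg h01.1]; exact h01.2
          _ = ‖P (V s)‖ := one_mul _
      have hgint : IntervalIntegrable (fun s => ‖P (V s)‖) volume 0 t := by
        apply ContinuousOn.intervalIntegrable
        rw [Set.uIcc_of_le ht.1]
        exact hucont.mono (hIccsub t ht)
      have hres := intervalIntegral.norm_integral_le_abs_of_norm_le hb hgint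
      rwa [abs_of_nonneg (intervalIntegral.integral_nonneg ht.1 (fun s _ => norm_nonneg _))]
        at hres
    intro t ht
    have := gronwall_zero (fun s => ‖P (V s)‖) 0 T (le_of_lt hT) hucont
      (fun s _ => norm_nonneg _) hle t ht
    exact norm_eq_zero.mp this
  -- the scalar component p
  set p : ℝ → ℝ := fun s => ⟪e, V s⟫ with hpdef
  have hpcont : ContinuousOn p (Set.Icc 0 T) := continuousOn_const.inner hVcont
  have hpeq : ∀ t ∈ Set.Icc (0:ℝ) T, p t = p 0 + ∫ s in (0:ℝ)..t, (-(A s)) * p s := by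
    intro t ht
    show (innerSL ℝ e) (V t) = (innerSL ℝ e) (V 0) + _
    rw [hVeq t ht, map_add, ← ContinuousLinearMap.intervalIntegral_comp_comm _ (hAVint t ht)]
    congr 1
    apply intervalIntegral.integral_congr
    intro s _
    exact (innerSL ℝ e).map_smul _ _
  have hp0 : p 0 = ‖V 0‖ := by
    show ⟪e, V 0⟫ = ‖V 0‖
    nth_rewrite 1 [hV0e]
    rw [real_inner_smul_right, hee, mul_one]
  have hVpe : ∀ s ∈ Set.Icc (0:ℝ) T, V s = p s • e := by
    intro s hs
    have h := hu s hs
    rw [hPapp] at h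
    exact sub_eq_zero.mp h
  have hpint : ∀ t ∈ Set.Icc (0:ℝ) T, IntervalIntegrable (fun s => (-(A s)) * p s) volume 0 t := by
    intro t ht
    have := aux_int (fun s => -(A s)) hAmeas.neg
      (fun s hs => by
        have h01 := hA01 s hs
        rw [abs_neg, abs_of_nonneg h01.1]; exact h01.2)
      p hpcont t ht
    simpa [smul_eq_mul] using this
  -- p is never zero on [0,T]
  have hpne : ∀ t ∈ Set.Icc (0:ℝ) T, p t ≠ 0 := by
    intro t0 ht0 h00
    have hsub0 : ∀ t ∈ Set.Icc (0:ℝ) t0, t ∈ Set.Icc (0:ℝ) T :=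
      fun t ht => ⟨ht.1, ht.2.trans ht0.2⟩
    have hle : ∀ t ∈ Set.Icc (0:ℝ) t0, |p t| ≤ ∫ s in t..t0, |p s| := by
      intro t ht
      have htT := hsub0 t ht
      have heq : p t = -∫ s in t..t0, (-(A s)) * p s := by
        have h1 := hpeq t htT
        have h2 := hpeq t0 ht0
        have h3 : (∫ s in (0:ℝ)..t0, (-(A s)) * p s) - ∫ s in (0:ℝ)..t, (-(A s)) * p s
            = ∫ s in t..t0, (-(A s)) * p s :=
          intervalIntegral.integral_interval_sub_left (hpint t0 ht0) (hpint t htT)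
        rw [h1]
        rw [h2] at h00
        linarith [h3]
      rw [heq, abs_neg]
      have hb : ∀ᵐ s ∂(volume.restrict (Set.uIoc t t0)), ‖(-(A s)) * p s‖ ≤ |p s| := by
        rw [Set.uIoc_of_le ht.2, ae_restrict_iff' measurableSet_Ioc]
        filter_upwards with s hs
        have hs' : s ∈ Set.Icc 0 T := ⟨ht.1.trans (le_of_lt hs.1), hs.2.trans ht0.2⟩
        have h01 := hA01 s hs'
        rw [Real.norm_eq_abs, abs_mul, abs_neg, abs_of_nonneg h01.1]
        calc A s * |p s| ≤ 1 * |p s| := mul_le_mul_of_nonneg_right h01.2 (abs_nonneg _)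
          _ = |p s| := one_mul _
      have hgint : IntervalIntegrable (fun s => |p s|) volume t t0 := by
        apply ContinuousOn.intervalIntegrable
        rw [Set.uIcc_of_le ht.2]
        exact (hpcont.mono (fun s hs => ⟨ht.1.trans hs.1, hs.2.trans ht0.2⟩)).abs
      have hres := intervalIntegral.norm_integral_le_abs_of_norm_le hb hgint
      rwa [abs_of_nonneg (intervalIntegral.integral_nonneg ht.2 (fun s _ => abs_nonneg _))]
        at hres
    have h0 := gronwall_zero' (fun s => |p s|) 0 t0 ht0.1
      ((hpcont.mono hsub0).abs) (fun s _ => abs_nonneg _) hle 0 ⟨le_rfl, ht0.1⟩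
    rw [abs_eq_zero] at h0
    rw [hp0] at h0
    exact (ne_of_gt hnV0) h0
  have hppos : ∀ t ∈ Set.Icc (0:ℝ) T, 0 < p t := by
    intro t ht
    rcases lt_trichotomy (p t) 0 with hlt | heq | hgt
    · exfalso
      have hivt : Set.Icc (p t) (p 0) ⊆ p '' Set.Icc 0 t :=
        intermediate_value_Icc' ht.1 (hpcont.mono (hIccsub t ht))
      have h0mem : (0:ℝ) ∈ Set.Icc (p t) (p 0) := ⟨le_of_lt hlt, by rw [hp0]; exact le_of_lt hnV0⟩
      obtain ⟨c, hc, hc0⟩ := hivt h0mem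
      exact hpne c (hIccsub t ht hc) hc0
    · exact absurd heq (hpne t ht)
    · exact hgt
  -- finish
  intro t ht
  constructor
  · refine ⟨p t * ‖V 0‖⁻¹, mul_pos (hppos t ht) (inv_pos.mpr hnV0), ?_⟩
    show V t = (p t * ‖V 0‖⁻¹) • V 0
    rw [hVpe t ht, he, smul_smul]
  · intro i hi
    -- orthogonal component of v i
    have hweq : ∀ r ∈ Set.Icc (0:ℝ) T, P (v r i) = P (v 0 i) + ∫ s in (0:ℝ)..r, -(P (v s i)) := by
      intro r hr
      rw [hv r hr i hi, map_add, ← P.intervalIntegral_comp_comm (hFint r hr i hi)]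
      congr 1
      apply intervalIntegral.integral_congr
      intro s hs
      rw [Set.uIcc_of_le hr.1] at hs
      have hs' : s ∈ Set.Icc 0 T := hIccsub r hr hs
      show P (-(v s i) + (1 - α s i) • V s) = _
      rw [map_add, map_neg, P.map_smul, hu s hs', smul_zero, add_zero]
    set z : ℝ → EuclideanSpace ℝ (Fin d) := fun s => P (v s i) - Real.exp (-s) • P (v 0 i)
      with hzdef
    have hzcont : ContinuousOn z (Set.Icc 0 T) := by
      apply ContinuousOn.sub (P.continuous.comp_continuousOn (hcont i))
      exact (((Real.continuous_exp.comp continuous_neg).smul continuous_const)).continuousOn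
    have hwint : ∀ r ∈ Set.Icc (0:ℝ) T, IntervalIntegrable (fun s => P (v s i)) volume 0 r := by
      intro r hr
      apply ContinuousOn.intervalIntegrable
      rw [Set.uIcc_of_le hr.1]
      exact (P.continuous.comp_continuousOn (hcont i)).mono (hIccsub r hr)
    have hzeq : ∀ r ∈ Set.Icc (0:ℝ) T, z r = -∫ s in (0:ℝ)..r, z s := by
      intro r hr
      have hexp : (∫ s in (0:ℝ)..r, Real.exp (-s)) = 1 - Real.exp (-r) := by
        rw [intervalIntegral.integral_comp_neg (fun s => Real.exp s), integral_exp]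
        simp
      have hec : IntervalIntegrable (fun s => Real.exp (-s) • P (v 0 i)) volume 0 r :=
        Continuous.intervalIntegrable (by fun_prop) 0 r
      have hsplit : ∫ s in (0:ℝ)..r, z s
          = (∫ s in (0:ℝ)..r, P (v s i)) - (1 - Real.exp (-r)) • P (v 0 i) := by
        have hz' : ∫ s in (0:ℝ)..r, z s
            = ∫ s in (0:ℝ)..r, (P (v s i) - Real.exp (-s) • P (v 0 i)) :=
          intervalIntegral.integral_congr (fun s _ => rfl)
        rw [hz', intervalIntegral.integral_sub (hwint r hr) hec,
          intervalIntegral.integral_smul_const, hexp]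
      rw [hsplit, hzdef]
      simp only
      rw [hweq r hr, intervalIntegral.integral_neg]
      rw [sub_smul, one_smul]
      abel
    have hzle : ∀ r ∈ Set.Icc (0:ℝ) T, ‖z r‖ ≤ ∫ s in (0:ℝ)..r, ‖z s‖ := by
      intro r hr
      rw [hzeq r hr, norm_neg]
      have := intervalIntegral.norm_integral_le_integral_norm (f := z) (μ := volume) hr.1
      exact this
    have hz0 : z t = 0 := by
      have := gronwall_zero (fun s => ‖z s‖) 0 T (le_of_lt hT) hzcont.norm
        (fun s _ => norm_nonneg _) hzle t ht
      exact norm_eq_zero.mp this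
    have hkey : P (v t i) = Real.exp (-t) • P (v 0 i) := by
      have := hz0
      rw [hzdef] at this
      simpa [sub_eq_zero] using this
    have hgoal1 : (v t i - ⟪v t i, e⟫ • e) = Real.exp (-t) • (v 0 i - ⟪v 0 i, e⟫ • e) := by
      rw [real_inner_comm e (v t i), real_inner_comm e (v 0 i)]
      exact hkey
    refine ⟨hgoal1, ?_⟩
    rw [hgoal1, norm_smul, Real.norm_eq_abs, abs_of_pos (Real.exp_pos _)]

end
end

section
/- Let ξ ∈ ℝ^N with ξ_1 ≥ ξ_2 ≥ … ≥ ξ_N, let M > 0 with M < N, let I⁺ = {i : ξ_i > 0}, and suppose |I⁺| > M and ξ_{⌈M−1⌉} > ξ_{⌈M⌉} > ξ_{⌈M+1⌉}. Then the vector α* defined by α*_i = 1 for i ≤ ⌊M⌋, α*_{⌊M⌋+1} = M − ⌊M⌋, and α*_i = 0 for i > ⌊M⌋+1 belongs to K = {α ∈ [0,1]^N : ∑_{i=1}^N α_i ≤ M} and minimizes the linear functional α ↦ ∑_{i=1}^N (1 − α_i) ξ_i over K. -/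
open MeasureTheory Real

noncomputable section

/-- Suppose `ξ_1 ≥ … ≥ ξ_N`, `0 < M < N`, the number of agents with positive state
exceeds `M`, and `ξ_{⌈M−1⌉} > ξ_{⌈M⌉} > ξ_{⌈M+1⌉}`.  Then the control `α*` with
`α*_i = 1` for `i ≤ ⌊M⌋`, `α*_{⌊M⌋+1} = M − ⌊M⌋` and `α*_i = 0` otherwise lies in
`K = {α ∈ [0,1]^N : ∑ α_i ≤ M}` and minimizes `α ↦ ∑_{i=1}^N (1 − α_i) ξ_i` over `K`. -/
theorem instantaneous_decrease_large_Iplus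
    (N : ℕ) (M : ℝ) (hM : 0 < M) (hMN : M < (N : ℝ)) (ξ : ℕ → ℝ)
    (horder : ∀ i ∈ Finset.Icc 1 N, ∀ j ∈ Finset.Icc 1 N, i ≤ j → ξ j ≤ ξ i)
    (hcard : M < ((((Finset.Icc 1 N).filter fun i => 0 < ξ i).card : ℝ)))
    (hsep1 : ξ ⌈M⌉₊ < ξ (⌈M - 1⌉₊))
    (hsep2 : ξ (⌈M + 1⌉₊) < ξ ⌈M⌉₊)
    (αstar : ℕ → ℝ)
    (hαstar : ∀ i, αstar i =
      if i ≤ ⌊M⌋₊ then (1 : ℝ) else if i = ⌊M⌋₊ + 1 then M - (⌊M⌋₊ : ℝ) else 0) :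
    (∀ i ∈ Finset.Icc 1 N, 0 ≤ αstar i ∧ αstar i ≤ 1) ∧
    (∑ i ∈ Finset.Icc 1 N, αstar i) ≤ M ∧
    (∀ β : ℕ → ℝ, (∀ i ∈ Finset.Icc 1 N, 0 ≤ β i ∧ β i ≤ 1) →
      (∑ i ∈ Finset.Icc 1 N, β i) ≤ M →
      ∑ i ∈ Finset.Icc 1 N, (1 - αstar i) * ξ i ≤
        ∑ i ∈ Finset.Icc 1 N, (1 - β i) * ξ i) := by
  set m := ⌊M⌋₊ with hm
  have hm1 : (m : ℝ) ≤ M := Nat.floor_le hM.le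
  have hm2 : M < (m : ℝ) + 1 := Nat.lt_floor_add_one M
  have hmN : m + 1 ≤ N := by
    have h : (m : ℝ) < (N : ℝ) := lt_of_le_of_lt hm1 hMN
    exact_mod_cast Nat.add_one_le_iff.mpr (by exact_mod_cast h)
  have hbounds : ∀ i ∈ Finset.Icc 1 N, 0 ≤ αstar i ∧ αstar i ≤ 1 := by
    intro i hi
    rw [hαstar i]
    split_ifs with h1 h2
    · exact ⟨zero_le_one, le_refl 1⟩
    · exact ⟨by linarith, by linarith⟩
    · exact ⟨le_refl 0, zero_le_one⟩
  have hIcc : Finset.Icc 1 N = Finset.Ioc 0 N := by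
    rw [← Finset.Icc_add_one_left_eq_Ioc]; rfl
  have hsum : ∑ i ∈ Finset.Icc 1 N, αstar i = M := by
    rw [hIcc, ← Finset.sum_Ioc_consecutive _ (Nat.zero_le (m+1)) hmN,
        ← Finset.sum_Ioc_consecutive _ (Nat.zero_le m) (Nat.le_succ m)]
    have h1 : ∑ i ∈ Finset.Ioc 0 m, αstar i = (m : ℝ) := by
      have hc : ∀ i ∈ Finset.Ioc 0 m, αstar i = 1 := fun i hi => by
        rw [hαstar i, if_pos (Finset.mem_Ioc.mp hi).2]
      rw [Finset.sum_congr rfl hc, Finset.sum_const, Nat.card_Ioc]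
      simp
    have h2 : ∑ i ∈ Finset.Ioc m (m+1), αstar i = M - (m : ℝ) := by
      have hs : Finset.Ioc m (m+1) = {m+1} := by
        ext x; simp only [Finset.mem_Ioc, Finset.mem_singleton]; omega
      rw [hs, Finset.sum_singleton, hαstar, if_neg (by omega), if_pos rfl]
    have h3 : ∑ i ∈ Finset.Ioc (m+1) N, αstar i = 0 := by
      apply Finset.sum_eq_zero
      intro i hi
      have hgt := (Finset.mem_Ioc.mp hi).1
      rw [hαstar i, if_neg (by omega), if_neg (by omega)]
    rw [h1, h2, h3]; ring
  refine ⟨hbounds, hsum.le, ?_⟩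
  intro β hβ hβsum
  have hmem : m + 1 ∈ Finset.Icc 1 N := Finset.mem_Icc.mpr ⟨by omega, hmN⟩
  have htpos : 0 < ξ (m + 1) := by
    obtain ⟨j, hjS, hjge⟩ : ∃ j ∈ (Finset.Icc 1 N).filter (fun i => 0 < ξ i), m + 1 ≤ j := by
      by_contra h
      push_neg at h
      have hsub : (Finset.Icc 1 N).filter (fun i => 0 < ξ i) ⊆ Finset.Icc 1 m := by
        intro x hx
        have hx1 := (Finset.mem_Icc.mp (Finset.mem_filter.mp hx).1).1
        have hx2 := h x hx
        exact Finset.mem_Icc.mpr ⟨hx1, by omega⟩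
      have hcard' := Finset.card_le_card hsub
      rw [Nat.card_Icc] at hcard'
      have hle : ((Finset.Icc 1 N).filter (fun i => 0 < ξ i)).card ≤ m := by omega
      have hle' : (((Finset.Icc 1 N).filter fun i => 0 < ξ i).card : ℝ) ≤ (m : ℝ) := by
        exact_mod_cast hle
      linarith
    have hjmem := (Finset.mem_filter.mp hjS).1
    have hjpos := (Finset.mem_filter.mp hjS).2
    have := horder (m+1) hmem j hjmem hjge
    linarith
  have key : ∀ i ∈ Finset.Icc 1 N, 0 ≤ (αstar i - β i) * (ξ i - ξ (m+1)) := by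
    intro i hi
    obtain ⟨hb0, hb1⟩ := hβ i hi
    rcases le_or_gt i m with h | h
    · have hξ : ξ (m+1) ≤ ξ i := horder i hi (m+1) hmem (by omega)
      have ha : αstar i = 1 := by rw [hαstar i, if_pos h]
      rw [ha]; nlinarith
    · rcases eq_or_lt_of_le (Nat.succ_le_of_lt h) with h' | h'
      · rw [← h']; simp
      · have hξ : ξ i ≤ ξ (m+1) := horder (m+1) hmem i hi (by omega)
        have ha : αstar i = 0 := by rw [hαstar i, if_neg (by omega), if_neg (by omega)]
        rw [ha]; nlinarith
  have hsum_key : 0 ≤ ∑ i ∈ Finset.Icc 1 N, (αstar i - β i) * (ξ i - ξ (m+1)) :=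
    Finset.sum_nonneg key
  have hsplit : ∑ i ∈ Finset.Icc 1 N, (αstar i - β i) * (ξ i - ξ (m+1))
      = (∑ i ∈ Finset.Icc 1 N, (1 - β i) * ξ i - ∑ i ∈ Finset.Icc 1 N, (1 - αstar i) * ξ i)
        - (∑ i ∈ Finset.Icc 1 N, αstar i - ∑ i ∈ Finset.Icc 1 N, β i) * ξ (m+1) := by
    simp only [sub_mul, mul_sub, one_mul, Finset.sum_sub_distrib, Finset.sum_mul]
    ring
  rw [hsplit, hsum] at hsum_key
  have hpos : 0 ≤ (M - ∑ i ∈ Finset.Icc 1 N, β i) * ξ (m+1) :=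
    mul_nonneg (by linarith) htpos.le
  linarith

end
end

section
/- Let λ : [0,T] → ℝ^N be an absolutely continuous solution of the adjoint equations λ̇_i(t) = (1/N) ∑_{j=1}^N α_j(t) λ_j(t) − λ̄(t) + λ_i(t) for almost every t, where λ̄ = (1/N) ∑_j λ_j. Then for any i, j, the difference z = λ_i − λ_j satisfies z(t) = z(t̄) e^{t−t̄} for all t, t̄ ∈ [0,T]; in particular, if λ_i(t̄) = λ_j(t̄) for some t̄ ∈ [0,T], then λ_i(t) = λ_j(t) for every t ∈ [0,T]. -/
set_option maxHeartbeats 1000000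


open MeasureTheory Real

noncomputable section

/-- An (absolutely continuous) solution of the adjoint equations of the final-cost problem,
`λ̇_i = (1/N) ∑_j α_j λ_j − λ̄ + λ_i`, encoded by the corresponding integral equations. -/
def IsAdjointFinal (N : ℕ) (T : ℝ) (α : ℝ → ℕ → ℝ) (lam : ℝ → ℕ → ℝ) : Prop :=
  (∀ i, ContinuousOn (fun t => lam t i) (Set.Icc 0 T)) ∧
  (∀ t ∈ Set.Icc (0 : ℝ) T, ∀ i ∈ Finset.Icc 1 N,
    lam t i = lam 0 i + ∫ s in (0 : ℝ)..t,
      ((N : ℝ)⁻¹ * (∑ j ∈ Finset.Icc 1 N, α s j * lam s j)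
        - (N : ℝ)⁻¹ * (∑ j ∈ Finset.Icc 1 N, lam s j) + lam s i))

/-- A measurable function bounded on `[0,t]` is interval integrable on `[0,t]`. -/
lemma intervalIntegrable_of_bdd {f : ℝ → ℝ} {t C : ℝ} (ht : 0 ≤ t)
    (hf : AEStronglyMeasurable f (volume.restrict (Set.Ioc 0 t)))
    (hC : ∀ s ∈ Set.Ioc (0 : ℝ) t, |f s| ≤ C) : IntervalIntegrable f volume 0 t := by
  rw [intervalIntegrable_iff_integrableOn_Ioc_of_le ht]
  refine Integrable.mono' (integrable_const C) hf ?_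
  filter_upwards [ae_restrict_mem measurableSet_Ioc] with s hs using by
    simpa using hC s hs

/-- For any solution of the adjoint equations, the difference `λ_i − λ_j` satisfies
`z(t) = z(t̄) e^{t − t̄}`; in particular two covectors that coincide at one time coincide
at every time of `[0,T]`. -/
theorem adjoint_difference_exponential
    (N : ℕ) (hN : 1 ≤ N) (T M : ℝ) (hT : 0 < T) (hM : 0 < M)
    (α : ℝ → ℕ → ℝ) (hα : IsAdmissible N T M α)
    (lam : ℝ → ℕ → ℝ) (hlam : IsAdjointFinal N T α lam) :
    ∀ i ∈ Finset.Icc 1 N, ∀ j ∈ Finset.Icc 1 N,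
      ∀ t ∈ Set.Icc (0 : ℝ) T, ∀ tbar ∈ Set.Icc (0 : ℝ) T,
        (lam t i - lam t j = (lam tbar i - lam tbar j) * Real.exp (t - tbar)) ∧
        (lam tbar i = lam tbar j → lam t i = lam t j) := by
  intro i hi j hj t ht tbar htbar
  obtain ⟨hcont, hinteq⟩ := hlam
  obtain ⟨hαmeas, hαbd, _⟩ := hα
  -- the difference z
  set z : ℝ → ℝ := fun s => lam s i - lam s j with hz_def
  have hzcont : ContinuousOn z (Set.Icc 0 T) := (hcont i).sub (hcont j)
  -- integrability of each integrand on [0, u] for u ∈ [0, T]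
  have hInt : ∀ k ∈ Finset.Icc 1 N, ∀ u ∈ Set.Icc (0 : ℝ) T,
      IntervalIntegrable (fun s =>
        ((N : ℝ)⁻¹ * (∑ j' ∈ Finset.Icc 1 N, α s j' * lam s j')
          - (N : ℝ)⁻¹ * (∑ j' ∈ Finset.Icc 1 N, lam s j') + lam s k)) volume 0 u := by
    intro k hk u hu
    have huIcc : Set.uIcc (0 : ℝ) u ⊆ Set.Icc 0 T := by
      rw [Set.uIcc_of_le hu.1]
      exact Set.Icc_subset_Icc le_rfl hu.2
    have hlamInt : ∀ m, IntervalIntegrable (fun s => lam s m) volume 0 u := fun m =>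
      ((hcont m).mono huIcc).intervalIntegrable
    have hS1 : IntervalIntegrable
        (fun s => ∑ j' ∈ Finset.Icc 1 N, α s j' * lam s j') volume 0 u := by
      have hfn : (fun s => ∑ j' ∈ Finset.Icc 1 N, α s j' * lam s j')
          = ∑ j' ∈ Finset.Icc 1 N, (fun s => α s j' * lam s j') := by
        funext s; simp
      rw [hfn]
      refine IntervalIntegrable.sum _ fun m hm => ?_
      -- α bounded by 1 on [0,T], lam bounded on compact
      obtain ⟨C, hCbd⟩ := (isCompact_Icc.image_of_continuousOn (hcont m)).isBounded.exists_norm_le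
      have hsub : Set.Ioc (0:ℝ) u ⊆ Set.Icc 0 T :=
        (Set.Ioc_subset_Icc_self).trans (Set.Icc_subset_Icc le_rfl hu.2)
      have hmeas1 : AEStronglyMeasurable (fun s => α s m * lam s m)
          (volume.restrict (Set.Ioc 0 u)) := by
        refine AEStronglyMeasurable.mul ((hαmeas m).aestronglyMeasurable.restrict) ?_
        exact ((hcont m).aestronglyMeasurable measurableSet_Icc).mono_measure
          (Measure.restrict_mono hsub le_rfl)
      refine intervalIntegrable_of_bdd (C := C) hu.1 hmeas1 ?_
      intro s hs
      have hsIcc : s ∈ Set.Icc (0 : ℝ) T := ⟨le_of_lt hs.1, hs.2.trans hu.2⟩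
      have h1 := hαbd s hsIcc m hm
      have h2 : |lam s m| ≤ C := by
        have := hCbd (lam s m) ⟨s, hsIcc, rfl⟩
        simpa using this
      calc |α s m * lam s m| = |α s m| * |lam s m| := abs_mul _ _
        _ ≤ 1 * C := by
            apply mul_le_mul _ h2 (abs_nonneg _) zero_le_one
            rw [abs_of_nonneg h1.1]; exact h1.2
        _ = C := one_mul C
    have hS2 : IntervalIntegrable
        (fun s => ∑ j' ∈ Finset.Icc 1 N, lam s j') volume 0 u := by
      have hfn : (fun s => ∑ j' ∈ Finset.Icc 1 N, lam s j')
          = ∑ j' ∈ Finset.Icc 1 N, (fun s => lam s j') := by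
        funext s; simp
      rw [hfn]
      exact IntervalIntegrable.sum _ fun m _ => hlamInt m
    exact ((hS1.const_mul _).sub (hS2.const_mul _)).add (hlamInt k)
  -- the integral equation for z
  have hzeq : ∀ u ∈ Set.Icc (0 : ℝ) T, z u = z 0 + ∫ s in (0 : ℝ)..u, z s := by
    intro u hu
    have hzi := hinteq u hu i hi
    have hzj := hinteq u hu j hj
    have hsub := intervalIntegral.integral_sub (hInt i hi u hu) (hInt j hj u hu)
    have : (fun s => ((N : ℝ)⁻¹ * (∑ j' ∈ Finset.Icc 1 N, α s j' * lam s j')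
          - (N : ℝ)⁻¹ * (∑ j' ∈ Finset.Icc 1 N, lam s j') + lam s i)
        - ((N : ℝ)⁻¹ * (∑ j' ∈ Finset.Icc 1 N, α s j' * lam s j')
          - (N : ℝ)⁻¹ * (∑ j' ∈ Finset.Icc 1 N, lam s j') + lam s j)) = z := by
      funext s; simp only [hz_def]; ring
    rw [this] at hsub
    show lam u i - lam u j = (lam 0 i - lam 0 j) + intervalIntegral z 0 u volume
    rw [hzi, hzj, hsub]
    ring
  -- F is the primitive
  set F : ℝ → ℝ := fun u => z 0 + ∫ s in (0 : ℝ)..u, z s with hF_def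
  have hzIntOn : IntegrableOn z (Set.Icc 0 T) volume := hzcont.integrableOn_Icc
  have hFcont : ContinuousOn F (Set.Icc 0 T) := by
    apply continuousOn_const.add
    have : Set.uIcc (0 : ℝ) T = Set.Icc 0 T := Set.uIcc_of_le hT.le
    rw [← this] at hzIntOn ⊢
    exact intervalIntegral.continuousOn_primitive_interval hzIntOn
  -- g = F * exp(-·) is constant
  set g : ℝ → ℝ := fun u => F u * Real.exp (-u) with hg_def
  have hgcont : ContinuousOn g (Set.Icc 0 T) :=
    hFcont.mul ((Real.continuous_exp.comp continuous_neg).continuousOn)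
  have hgderiv : ∀ x ∈ Set.Ico (0 : ℝ) T, HasDerivWithinAt g 0 (Set.Ici x) x := by
    intro x hx
    have hxIcc : x ∈ Set.Icc (0 : ℝ) T := ⟨hx.1, hx.2.le⟩
    have hmemIci : Set.Icc (0 : ℝ) T ∈ nhdsWithin x (Set.Ici x) := Icc_mem_nhdsGE_of_mem hx
    have hmemIoi : Set.Icc (0 : ℝ) T ∈ nhdsWithin x (Set.Ioi x) :=
      nhdsWithin_mono x Set.Ioi_subset_Ici_self hmemIci
    have hzint : IntervalIntegrable z volume 0 x := by
      have : Set.uIcc (0 : ℝ) x ⊆ Set.Icc 0 T := by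
        rw [Set.uIcc_of_le hx.1]; exact Set.Icc_subset_Icc le_rfl hx.2.le
      exact (hzcont.mono this).intervalIntegrable
    have hmeas : StronglyMeasurableAtFilter z (nhdsWithin x (Set.Ioi x)) volume :=
      ⟨Set.Icc 0 T, hmemIoi, hzcont.aestronglyMeasurable measurableSet_Icc⟩
    have hcontW : ContinuousWithinAt z (Set.Ioi x) x :=
      (hzcont.continuousWithinAt hxIcc).mono_of_mem_nhdsWithin hmemIoi
    have hFderiv : HasDerivWithinAt F (z x) (Set.Ici x) x := by
      apply HasDerivWithinAt.const_add
      exact intervalIntegral.integral_hasDerivWithinAt_right hzint hmeas hcontW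
    have hexp : HasDerivWithinAt (fun u => Real.exp (-u)) (-Real.exp (-x)) (Set.Ici x) x := by
      have : HasDerivAt (fun u => Real.exp (-u)) (Real.exp (-x) * (-1)) x :=
        (Real.hasDerivAt_exp (-x)).comp x ((hasDerivAt_id x).neg)
      simpa using this.hasDerivWithinAt
    have hmul := hFderiv.mul hexp
    have hFx : F x = z x := (hzeq x hxIcc).symm
    have h0 : z x * Real.exp (-x) + F x * (-Real.exp (-x)) = 0 := by rw [hFx]; ring
    rw [h0] at hmul
    exact hmul
  have hgconst := constant_of_has_deriv_right_zero hgcont hgderiv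
  -- conclude: F u = z 0 * exp u on [0,T]
  have hFeq : ∀ u ∈ Set.Icc (0 : ℝ) T, z u = z 0 * Real.exp u := by
    intro u hu
    have hgu : g u = g 0 := hgconst u hu
    have hg0 : g 0 = z 0 := by
      simp [hg_def, hF_def, intervalIntegral.integral_same]
    have : F u * Real.exp (-u) = z 0 := by rw [← hg0]; exact hgu
    have hFu : F u = z 0 * Real.exp u := by
      have hne : Real.exp (-u) ≠ 0 := (Real.exp_pos _).ne'
      field_simp [Real.exp_neg] at this ⊢
      rw [← this, mul_assoc, ← Real.exp_add, neg_add_cancel, Real.exp_zero, mul_one]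
    rw [hzeq u hu]
    exact hFu
  have h1 := hFeq t ht
  have h2 := hFeq tbar htbar
  constructor
  · show z t = z tbar * Real.exp (t - tbar)
    rw [h1, h2, mul_assoc, ← Real.exp_add]
    have harg : tbar + (t - tbar) = t := by ring
    rw [harg]
  · intro heq
    have hz_tbar : z tbar = 0 := by simp [hz_def, heq]
    have h3 : z 0 * Real.exp tbar = 0 := by rw [← h2]; exact hz_tbar
    have hz0 : z 0 = 0 := by
      rcases mul_eq_zero.mp h3 with h | h
      · exact h
      · exact absurd h (Real.exp_ne_zero _)
    have hzt : lam t i - lam t j = 0 := by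
      show z t = 0
      rw [h1, hz0, zero_mul]
    linarith

end
end

section
/- Assume the initial state is ordered: ξ⁰_1 ≥ ξ⁰_2 ≥ … ≥ ξ⁰_N. If there exists a control optimal for the final cost, then there exists a control α, optimal for the final cost, whose trajectory ξ satisfies ξ_i(t) ≥ ξ_j(t) for every t ∈ [0,T] whenever i < j. -/
open MeasureTheory Real

noncomputable section

/-- The migration functional `𝕍(t) = (1/N) ∑_{i=1}^N ξ_i(t)²`. -/
def migV (N : ℕ) (ξ : ℝ → ℕ → ℝ) (t : ℝ) : ℝ :=
  (N : ℝ)⁻¹ * ∑ i ∈ Finset.Icc 1 N, (ξ t i) ^ 2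

/-- `α` (with trajectory `ξ`) is optimal for the final cost `𝕍(T)`. -/
def IsOptimalFinal (N : ℕ) (T M : ℝ) (ξ0 : ℕ → ℝ) (α ξ : ℝ → ℕ → ℝ) : Prop :=
  IsAdmissible N T M α ∧ IsTrajectory N T α ξ0 ξ ∧
  ∀ β η, IsAdmissible N T M β → IsTrajectory N T β ξ0 η → migV N ξ T ≤ migV N η T

namespace OrdCtrl
open Set


def pp (d : ℝ → ℝ) (a : ℝ) (x : ℝ) : ℝ := sSup {s | s ∈ Icc a x ∧ d s ≤ 0}
def qq (d : ℝ → ℝ) (b : ℝ) (x : ℝ) : ℝ := sInf {s | s ∈ Icc x b ∧ d s ≤ 0}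

variable {d u : ℝ → ℝ} {a b : ℝ}

lemma pp_mem (hd : Continuous d) (ha : d a ≤ 0) {x : ℝ} (hax : a ≤ x) :
    pp d a x ∈ {s | s ∈ Icc a x ∧ d s ≤ 0} :=
  IsClosed.csSup_mem (isClosed_Icc.inter (isClosed_le hd continuous_const))
    ⟨a, ⟨le_refl a, hax⟩, ha⟩ ⟨x, fun _ hs => hs.1.2⟩

lemma qq_mem (hd : Continuous d) (hb : d b ≤ 0) {x : ℝ} (hxb : x ≤ b) :
    qq d b x ∈ {s | s ∈ Icc x b ∧ d s ≤ 0} :=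
  IsClosed.csInf_mem (isClosed_Icc.inter (isClosed_le hd continuous_const))
    ⟨b, ⟨hxb, le_refl b⟩, hb⟩ ⟨x, fun _ hs => hs.1.1⟩

/-- Strict positivity on the open component. -/
lemma pos_between (hd : Continuous d) (ha : d a ≤ 0) (hb : d b ≤ 0) {x : ℝ}
    (hax : a ≤ x) (hxb : x ≤ b) (hdx : 0 < d x) :
    ∀ s, pp d a x < s → s < qq d b x → 0 < d s := by
  intro s h1 h2
  by_contra h
  push_neg at h
  rcases le_total s x with hsx | hxs
  · exact absurd (le_csSup ⟨x, fun _ hs => hs.1.2⟩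
      (show s ∈ {s | s ∈ Icc a x ∧ d s ≤ 0} from ⟨⟨le_trans (pp_mem hd ha hax).1.1 h1.le, hsx⟩, h⟩))
      (not_le.mpr h1)
  · exact absurd (csInf_le ⟨x, fun _ hs => hs.1.1⟩
      (show s ∈ {s | s ∈ Icc x b ∧ d s ≤ 0} from ⟨⟨hxs, le_trans h2.le (qq_mem hd hb hxb).1.2⟩, h⟩))
      (not_le.mpr h2)

lemma pp_lt (hd : Continuous d) (ha : d a ≤ 0) {x : ℝ} (hax : a ≤ x) (hdx : 0 < d x) :
    pp d a x < x :=
  lt_of_le_of_ne (pp_mem hd ha hax).1.2 (fun h => absurd ((h ▸ (pp_mem hd ha hax).2)) (not_le.mpr hdx))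

lemma lt_qq (hd : Continuous d) (hb : d b ≤ 0) {x : ℝ} (hxb : x ≤ b) (hdx : 0 < d x) :
    x < qq d b x := by
  rcases lt_or_eq_of_le (qq_mem hd hb hxb).1.1 with h | h
  · exact h
  · exact absurd (h ▸ (qq_mem hd hb hxb).2) (not_le.mpr hdx)

lemma d_pp_eq_zero (hd : Continuous d) (ha : d a ≤ 0) (hb : d b ≤ 0) {x : ℝ}
    (hax : a ≤ x) (hxb : x ≤ b) (hdx : 0 < d x) : d (pp d a x) = 0 := by
  refine le_antisymm (pp_mem hd ha hax).2 ?_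
  by_contra hlt
  push_neg at hlt
  obtain ⟨ε, hε, hball⟩ := Metric.isOpen_iff.mp (isOpen_lt hd continuous_const)
    (pp d a x) hlt
  have hplt := pp_lt hd ha hax hdx
  have hxq := lt_qq hd hb hxb hdx
  have hmin : 0 < min (ε/2) ((x - pp d a x)/2) := lt_min (by linarith) (by linarith)
  have hm1 : min (ε/2) ((x - pp d a x)/2) ≤ ε/2 := min_le_left _ _
  have hm2 : min (ε/2) ((x - pp d a x)/2) ≤ (x - pp d a x)/2 := min_le_right _ _
  have h1 : pp d a x < pp d a x + min (ε/2) ((x - pp d a x)/2) := by linarith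
  have h2 : pp d a x + min (ε/2) ((x - pp d a x)/2) < qq d b x := by linarith
  have hball' : pp d a x + min (ε/2) ((x - pp d a x)/2) ∈ Metric.ball (pp d a x) ε := by
    simp only [Metric.mem_ball, Real.dist_eq]
    rw [add_sub_cancel_left, abs_of_nonneg hmin.le]
    linarith
  exact absurd (pos_between hd ha hb hax hxb hdx _ h1 h2) (not_lt.mpr (hball hball').le)

lemma d_qq_eq_zero (hd : Continuous d) (ha : d a ≤ 0) (hb : d b ≤ 0) {x : ℝ}
    (hax : a ≤ x) (hxb : x ≤ b) (hdx : 0 < d x) : d (qq d b x) = 0 := by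
  refine le_antisymm (qq_mem hd hb hxb).2 ?_
  by_contra hlt
  push_neg at hlt
  obtain ⟨ε, hε, hball⟩ := Metric.isOpen_iff.mp (isOpen_lt hd continuous_const)
    (qq d b x) hlt
  have hplt := pp_lt hd ha hax hdx
  have hxq := lt_qq hd hb hxb hdx
  have hmin : 0 < min (ε/2) ((qq d b x - x)/2) := lt_min (by linarith) (by linarith)
  have hm1 : min (ε/2) ((qq d b x - x)/2) ≤ ε/2 := min_le_left _ _
  have hm2 : min (ε/2) ((qq d b x - x)/2) ≤ (qq d b x - x)/2 := min_le_right _ _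
  have h2 : qq d b x - min (ε/2) ((qq d b x - x)/2) < qq d b x := by linarith
  have h1 : pp d a x < qq d b x - min (ε/2) ((qq d b x - x)/2) := by linarith
  have hball' : qq d b x - min (ε/2) ((qq d b x - x)/2) ∈ Metric.ball (qq d b x) ε := by
    simp only [Metric.mem_ball, Real.dist_eq]
    rw [sub_sub_cancel_left, abs_neg, abs_of_nonneg hmin.le]
    linarith
  exact absurd (pos_between hd ha hb hax hxb hdx _ h1 h2) (not_lt.mpr (hball hball').le)

/-- Stability of component endpoints. -/
lemma pp_stable (hd : Continuous d) (ha : d a ≤ 0) (hb : d b ≤ 0) {x y : ℝ}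
    (hax : a ≤ x) (hxb : x ≤ b) (hdx : 0 < d x)
    (hy1 : pp d a x < y) (hy2 : y < qq d b x) (hay : a ≤ y) (hyb : y ≤ b) :
    pp d a y = pp d a x ∧ qq d b y = qq d b x := by
  have hdy : 0 < d y := pos_between hd ha hb hax hxb hdx y hy1 hy2
  constructor
  · refine le_antisymm ?_ ?_
    · by_contra h
      push_neg at h
      have hm := pp_mem hd ha hay
      exact absurd (pos_between hd ha hb hax hxb hdx _ h (lt_of_le_of_lt hm.1.2 hy2))
        (not_lt.mpr hm.2)
    · exact le_csSup ⟨y, fun _ hs => hs.1.2⟩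
        ⟨⟨(pp_mem hd ha hax).1.1, hy1.le⟩, (pp_mem hd ha hax).2⟩
  · refine le_antisymm ?_ ?_
    · exact csInf_le ⟨y, fun _ hs => hs.1.1⟩
        ⟨⟨hy2.le, (qq_mem hd hb hxb).1.2⟩, (qq_mem hd hb hxb).2⟩
    · by_contra h
      push_neg at h
      have hm := qq_mem hd hb hyb
      exact absurd (pos_between hd ha hb hax hxb hdx _ (lt_of_lt_of_le hy1 hm.1.1) h)
        (not_lt.mpr hm.2)

lemma interval_integrable_sub (hu : IntegrableOn u (Icc a b)) {x y : ℝ}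
    (hx : x ∈ Icc a b) (hy : y ∈ Icc a b) : IntervalIntegrable u volume x y := by
  apply MeasureTheory.IntegrableOn.intervalIntegrable
  apply hu.mono_set
  intro s hs
  rw [Set.uIcc_eq_union] at hs
  rcases hs with hs | hs
  · exact ⟨le_trans hx.1 hs.1, le_trans hs.2 hy.2⟩
  · exact ⟨le_trans hy.1 hs.1, le_trans hs.2 hx.2⟩

/-- Core lemma: if `d` vanishes at both endpoints, the integral of `u` over the
positivity set of `d` vanishes. -/
lemma C1 (hab : a ≤ b) (hd : Continuous d)
    (hu : IntegrableOn u (Icc a b))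
    (hint : ∀ x ∈ Icc a b, d x = d a + ∫ s in a..x, u s)
    (ha : d a = 0) (hb : d b = 0) :
    ∫ s in a..b, ({x | 0 < d x}.indicator u s) = 0 := by
  have ha' : d a ≤ 0 := le_of_eq ha
  have hb' : d b ≤ 0 := le_of_eq hb
  set S : Set ℝ := {x | 0 < d x} with hS
  have hSmeas : MeasurableSet S := measurableSet_lt measurable_const hd.measurable
  set U : Set ℝ := Ioo a b ∩ S with hU
  have hUsub : U ⊆ Icc a b := fun s hs => ⟨hs.1.1.le, hs.1.2.le⟩
  -- each component has zero integral
  have hcomp_int : ∀ x ∈ U, ∫ s in Ioo (pp d a x) (qq d b x), u s = 0 := by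
    intro x hx
    have hax : a ≤ x := hx.1.1.le
    have hxb : x ≤ b := hx.1.2.le
    have hdx : 0 < d x := hx.2
    have hpm := pp_mem hd ha' hax
    have hqm := qq_mem hd hb' hxb
    have hpi : pp d a x ∈ Icc a b := ⟨hpm.1.1, le_trans hpm.1.2 hxb⟩
    have hqi : qq d b x ∈ Icc a b := ⟨le_trans hax hqm.1.1, hqm.1.2⟩
    have hpq : pp d a x ≤ qq d b x :=
      le_trans (pp_lt hd ha' hax hdx).le (lt_qq hd hb' hxb hdx).le
    have e1 : (∫ s in (pp d a x)..(qq d b x), u s) = d (qq d b x) - d (pp d a x) := by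
      rw [hint _ hqi, hint _ hpi]
      rw [show d a + (∫ s in a..qq d b x, u s) - (d a + ∫ s in a..pp d a x, u s)
        = (∫ s in a..qq d b x, u s) - ∫ s in a..pp d a x, u s by ring]
      exact (intervalIntegral.integral_interval_sub_left
        (interval_integrable_sub hu (left_mem_Icc.mpr hab) hqi)
        (interval_integrable_sub hu (left_mem_Icc.mpr hab) hpi)).symm
    rw [d_pp_eq_zero hd ha' hb' hax hxb hdx, d_qq_eq_zero hd ha' hb' hax hxb hdx,
      sub_zero] at e1
    rw [← MeasureTheory.integral_Ioc_eq_integral_Ioo,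
      ← intervalIntegral.integral_of_le hpq]
    exact e1
  -- component containment
  have hIoosub : ∀ x ∈ U, Ioo (pp d a x) (qq d b x) ⊆ U := by
    intro x hx s hs
    have hax : a ≤ x := hx.1.1.le
    have hxb : x ≤ b := hx.1.2.le
    have hpm := pp_mem hd ha' hax
    have hqm := qq_mem hd hb' hxb
    exact ⟨⟨lt_of_le_of_lt hpm.1.1 hs.1, lt_of_lt_of_le hs.2 hqm.1.2⟩,
      pos_between hd ha' hb' hax hxb hx.2 s hs.1 hs.2⟩
  have hxmem : ∀ x ∈ U, x ∈ Ioo (pp d a x) (qq d b x) := fun x hx =>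
    ⟨pp_lt hd ha' hx.1.1.le hx.2, lt_qq hd hb' hx.1.2.le hx.2⟩
  -- stability: same component for any point of the component
  have hstab : ∀ x ∈ U, ∀ y ∈ Ioo (pp d a x) (qq d b x),
      pp d a y = pp d a x ∧ qq d b y = qq d b x := by
    intro x hx y hy
    have hyU : y ∈ U := hIoosub x hx hy
    exact pp_stable hd ha' hb' hx.1.1.le hx.1.2.le hx.2 hy.1 hy.2 hyU.1.1.le hyU.1.2.le
  -- the enumeration
  set e : ℕ → ℚ := fun n => (Denumerable.eqv ℚ).symm n with he
  set g : ℕ → Set ℝ := fun n =>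
    if ((e n : ℝ) ∈ U) then Ioo (pp d a (e n)) (qq d b (e n)) else ∅ with hg
  have hgsub : ∀ n, g n ⊆ U := by
    intro n
    simp only [hg]
    split_ifs with h
    · exact hIoosub _ h
    · exact empty_subset _
  have hgU : U ⊆ ⋃ n, g n := by
    intro x hx
    obtain ⟨r, hr1, hr2⟩ := exists_rat_btwn (pp_lt hd ha' hx.1.1.le hx.2)
    have hrIoo : (r : ℝ) ∈ Ioo (pp d a x) (qq d b x) :=
      ⟨hr1, lt_trans hr2 (lt_qq hd hb' hx.1.2.le hx.2)⟩
    have hrU : (r : ℝ) ∈ U := hIoosub x hx hrIoo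
    have hst := hstab x hx _ hrIoo
    refine Set.mem_iUnion.mpr ⟨Denumerable.eqv ℚ r, ?_⟩
    simp only [hg, he, Equiv.symm_apply_apply]
    rw [if_pos hrU, hst.1, hst.2]
    exact hxmem x hx
  have hgmeas : ∀ n, MeasurableSet (g n) := by
    intro n
    simp only [hg]
    split_ifs
    · exact measurableSet_Ioo
    · exact MeasurableSet.empty
  have hgzero : ∀ n, ∫ s in g n, u s = 0 := by
    intro n
    simp only [hg]
    split_ifs with h
    · exact hcomp_int _ h
    · simp
  -- equal-or-disjoint
  have hgeod : ∀ n m, (g n ∩ g m).Nonempty → g n = g m := by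
    intro n m ⟨y, hy1, hy2⟩
    have hn : ((e n : ℝ)) ∈ U := by
      by_contra h; simp only [hg, if_neg h] at hy1; exact hy1
    have hm : ((e m : ℝ)) ∈ U := by
      by_contra h; simp only [hg, if_neg h] at hy2; exact hy2
    simp only [hg, if_pos hn, if_pos hm] at hy1 hy2 ⊢
    have h1 := hstab _ hn _ hy1
    have h2 := hstab _ hm _ hy2
    rw [← h1.1, ← h1.2, ← h2.1, ← h2.2]
  -- disjointed family
  have hdisj_cases : ∀ n, disjointed g n = ∅ ∨ disjointed g n = g n := by
    intro n
    cases n with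
    | zero => right; exact disjointed_zero g
    | succ n =>
      rw [disjointed_add_one]
      by_cases hc : ∃ i ≤ n, (g i ∩ g (n+1)).Nonempty
      · left
        obtain ⟨i, hi, hne⟩ := hc
        have : g (n+1) ≤ partialSups g n := by
          rw [← hgeod i (n+1) hne]
          exact le_partialSups_of_le g hi
        rw [Set.diff_eq_empty.mpr this]
      · right
        push_neg at hc
        apply subset_antisymm Set.diff_subset
        intro x hx2
        refine ⟨hx2, fun hx1 => ?_⟩
        rw [partialSups_eq_biSup] at hx1
        simp only [Set.iSup_eq_iUnion, Set.mem_iUnion] at hx1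
        obtain ⟨i, hi, hxi⟩ := hx1
        have h0 := hc i hi
        exact absurd (Set.mem_inter hxi hx2) (by rw [h0]; exact Set.notMem_empty x)
  have hUdisj : U = ⋃ n, disjointed g n := by
    rw [iUnion_disjointed]
    exact le_antisymm hgU (Set.iUnion_subset hgsub)
  have hintU : IntegrableOn u U := hu.mono_set hUsub
  have hsum : ∫ s in U, u s = 0 := by
    rw [hUdisj, MeasureTheory.integral_iUnion
      (MeasurableSet.disjointed hgmeas) (disjoint_disjointed g)
      (hUdisj ▸ hintU)]
    have hz : ∀ n, ∫ s in disjointed g n, u s = 0 := by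
      intro n
      rcases hdisj_cases n with h | h <;> rw [h]
      · simp
      · exact hgzero n
    rw [show (fun n => ∫ s in disjointed g n, u s) = fun _ => (0:ℝ) from funext hz]
    exact tsum_zero
  rw [intervalIntegral.integral_of_le hab, MeasureTheory.setIntegral_indicator hSmeas]
  have hIocU : Ioc a b ∩ S = U := by
    ext x
    constructor
    · rintro ⟨hx1, hx2⟩
      refine ⟨⟨hx1.1, lt_of_le_of_ne hx1.2 ?_⟩, hx2⟩
      rintro rfl
      exact absurd hx2 (by simp [hS, hb])
    · rintro ⟨hx1, hx2⟩
      exact ⟨⟨hx1.1, hx1.2.le⟩, hx2⟩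
  rw [hIocU]
  exact hsum

lemma hint_sub (hu : IntegrableOn u (Icc a b))
    (hint : ∀ x ∈ Icc a b, d x = d a + ∫ s in a..x, u s)
    {c : ℝ} (hc : c ∈ Icc a b) :
    ∀ x ∈ Icc a b, d x = d c + ∫ s in c..x, u s := by
  intro x hx
  rw [hint x hx, hint c hc]
  rw [show d a + (∫ s in a..x, u s) = d a + (∫ s in a..c, u s) +
    ((∫ s in a..x, u s) - (∫ s in a..c, u s)) by ring]
  congr 1
  exact intervalIntegral.integral_interval_sub_left
    (interval_integrable_sub hu (left_mem_Icc.mpr (hc.1.trans hc.2)) hx)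
    (interval_integrable_sub hu (left_mem_Icc.mpr (hc.1.trans hc.2)) hc)

lemma pos_on_Ioo_left (hd : Continuous d) {x y : ℝ}
    (hnz : ∀ s ∈ Ico x y, d s ≠ 0) (hx : 0 < d x) : ∀ s ∈ Ioo x y, 0 < d s := by
  intro s hs
  rcases lt_trichotomy (d s) 0 with h | h | h
  · obtain ⟨c, hc, hdc⟩ := intermediate_value_Icc' hs.1.le (hd.continuousOn)
      (show (0:ℝ) ∈ Icc (d s) (d x) from ⟨h.le, hx.le⟩)
    exact absurd hdc (hnz c ⟨hc.1, lt_of_le_of_lt hc.2 hs.2⟩)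
  · exact absurd h (hnz s ⟨hs.1.le, hs.2⟩)
  · exact h

lemma pos_on_Ioo_right (hd : Continuous d) {x y : ℝ}
    (hnz : ∀ s ∈ Ioc x y, d s ≠ 0) (hy : 0 < d y) : ∀ s ∈ Ioo x y, 0 < d s := by
  intro s hs
  rcases lt_trichotomy (d s) 0 with h | h | h
  · obtain ⟨c, hc, hdc⟩ := intermediate_value_Icc hs.2.le (hd.continuousOn)
      (show (0:ℝ) ∈ Icc (d s) (d y) from ⟨h.le, hy.le⟩)
    exact absurd hdc (hnz c ⟨lt_of_lt_of_le hs.1 hc.1, hc.2⟩)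
  · exact absurd h (hnz s ⟨hs.1, hs.2.le⟩)
  · exact h

lemma neg_on_Ioo_left (hd : Continuous d) {x y : ℝ}
    (hnz : ∀ s ∈ Ico x y, d s ≠ 0) (hx : d x < 0) : ∀ s ∈ Ioo x y, d s < 0 := by
  intro s hs
  have := pos_on_Ioo_left (d := fun z => -(d z)) hd.neg
    (fun s hs h => hnz s hs (neg_eq_zero.mp h)) (neg_pos.mpr hx) s hs
  simpa using this

lemma neg_on_Ioo_right (hd : Continuous d) {x y : ℝ}
    (hnz : ∀ s ∈ Ioc x y, d s ≠ 0) (hy : d y < 0) : ∀ s ∈ Ioo x y, d s < 0 := by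
  intro s hs
  have := pos_on_Ioo_right (d := fun z => -(d z)) hd.neg
    (fun s hs h => hnz s hs (neg_eq_zero.mp h)) (neg_pos.mpr hy) s hs
  simpa using this

lemma caseP (hd : Continuous d) (hu : IntegrableOn u (Icc a b))
    (hint : ∀ x ∈ Icc a b, d x = d a + ∫ s in a..x, u s)
    {x y : ℝ} (hx : x ∈ Icc a b) (hy : y ∈ Icc a b) (hxy : x ≤ y)
    (hpos : ∀ s ∈ Ioo x y, 0 < d s) :
    ∫ s in x..y, ({z | 0 < d z}.indicator u s) = d y - d x := by
  have h1 : (∫ s in x..y, ({z | 0 < d z}.indicator u s)) = ∫ s in Ioo x y, u s := by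
    rw [intervalIntegral.integral_of_le hxy, MeasureTheory.integral_Ioc_eq_integral_Ioo]
    apply MeasureTheory.setIntegral_congr_fun measurableSet_Ioo
    intro s hs
    exact Set.indicator_of_mem (show s ∈ {z | 0 < d z} from hpos s hs) u
  rw [h1, ← MeasureTheory.integral_Ioc_eq_integral_Ioo,
    ← intervalIntegral.integral_of_le hxy]
  rw [hint_sub hu hint hx y hy]
  ring

lemma caseN (hu : IntegrableOn u (Icc a b))
    {x y : ℝ} (hxy : x ≤ y)
    (hneg : ∀ s ∈ Ioo x y, d s < 0) :
    ∫ s in x..y, ({z | 0 < d z}.indicator u s) = 0 := by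
  have h1 : (∫ s in Ioo x y, ({z | 0 < d z}.indicator u s)) = ∫ s in Ioo x y, (0:ℝ) := by
    apply MeasureTheory.setIntegral_congr_fun measurableSet_Ioo
    intro s hs
    exact Set.indicator_of_notMem
      (show s ∉ {z | 0 < d z} by simp only [Set.mem_setOf_eq, not_lt]; exact (hneg s hs).le) u
  rw [intervalIntegral.integral_of_le hxy, MeasureTheory.integral_Ioc_eq_integral_Ioo, h1]
  simp

lemma key (hab : a ≤ b) (hd : Continuous d) (hu : IntegrableOn u (Icc a b))
    (hint : ∀ x ∈ Icc a b, d x = d a + ∫ s in a..x, u s)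
    {t : ℝ} (ht : t ∈ Icc a b) :
    ∫ s in a..t, ({z | 0 < d z}.indicator u s) = max (d t) 0 - max (d a) 0 := by
  have hSmeas : MeasurableSet {z | 0 < d z} := measurableSet_lt measurable_const hd.measurable
  have huind : IntegrableOn ({z | 0 < d z}.indicator u) (Icc a b) := hu.indicator hSmeas
  have haI : a ∈ Icc a b := left_mem_Icc.mpr hab
  set Z : Set ℝ := {s | s ∈ Icc a t ∧ d s = 0} with hZdef
  have hZclosed : IsClosed Z :=
    isClosed_Icc.inter (isClosed_eq hd continuous_const)
  by_cases hZ : Z.Nonempty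
  · have hbddA : BddAbove Z := ⟨t, fun s hs => hs.1.2⟩
    have hbddB : BddBelow Z := ⟨a, fun s hs => hs.1.1⟩
    have hm1 : sInf Z ∈ Z := IsClosed.csInf_mem hZclosed hZ hbddB
    have hm2 : sSup Z ∈ Z := IsClosed.csSup_mem hZclosed hZ hbddA
    set m₁ := sInf Z
    set m₂ := sSup Z
    have hm12 : m₁ ≤ m₂ := csInf_le_csSup hZ hbddB hbddA
    have hm1I : m₁ ∈ Icc a b := ⟨hm1.1.1, hm1.1.2.trans ht.2⟩
    have hm2I : m₂ ∈ Icc a b := ⟨hm2.1.1, hm2.1.2.trans ht.2⟩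
    have hsplit : (∫ s in a..t, ({z | 0 < d z}.indicator u s)) =
        (∫ s in a..m₁, ({z | 0 < d z}.indicator u s)) +
        (∫ s in m₁..m₂, ({z | 0 < d z}.indicator u s)) +
        (∫ s in m₂..t, ({z | 0 < d z}.indicator u s)) := by
      rw [intervalIntegral.integral_add_adjacent_intervals
        (interval_integrable_sub huind haI hm1I) (interval_integrable_sub huind hm1I hm2I),
        intervalIntegral.integral_add_adjacent_intervals
        (interval_integrable_sub huind haI hm2I) (interval_integrable_sub huind hm2I ht)]
    have hmid : (∫ s in m₁..m₂, ({z | 0 < d z}.indicator u s)) = 0 := by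
      apply C1 hm12 hd (hu.mono_set (Icc_subset_Icc hm1I.1 hm2I.2))
      · intro x hx
        rw [hint_sub hu hint hm1I x ⟨hm1I.1.trans hx.1, hx.2.trans hm2I.2⟩]
      · exact hm1.2
      · exact hm2.2
    have hfirst : (∫ s in a..m₁, ({z | 0 < d z}.indicator u s)) = - max (d a) 0 := by
      rcases eq_or_lt_of_le hm1.1.1 with heq | hlt
      · have hda : d a = 0 := by rw [heq]; exact hm1.2
        rw [← heq, intervalIntegral.integral_same, hda]
        simp
      · have hnz : ∀ s ∈ Ico a m₁, d s ≠ 0 := by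
          intro s hs hzero
          exact absurd (csInf_le hbddB (show s ∈ Z from
            ⟨⟨hs.1, hs.2.le.trans hm1.1.2⟩, hzero⟩)) (not_le.mpr hs.2)
        have hda : d a ≠ 0 := hnz a ⟨le_refl a, hlt⟩
        rcases lt_or_gt_of_ne hda with hneg | hpos
        · rw [caseN hu hm1.1.1 (neg_on_Ioo_left hd hnz hneg), max_eq_right hneg.le]
          simp
        · rw [caseP hd hu hint haI hm1I hm1.1.1 (pos_on_Ioo_left hd hnz hpos),
            hm1.2, max_eq_left hpos.le]
          ring
    have hthird : (∫ s in m₂..t, ({z | 0 < d z}.indicator u s)) = max (d t) 0 := by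
      rcases eq_or_lt_of_le hm2.1.2 with heq | hlt
      · have hdt : d t = 0 := by rw [← heq]; exact hm2.2
        rw [heq, intervalIntegral.integral_same, hdt]
        simp
      · have hnz : ∀ s ∈ Ioc m₂ t, d s ≠ 0 := by
          intro s hs hzero
          exact absurd (le_csSup hbddA (show s ∈ Z from
            ⟨⟨hm2.1.1.trans hs.1.le, hs.2⟩, hzero⟩)) (not_le.mpr hs.1)
        have hdt : d t ≠ 0 := hnz t ⟨hlt, le_refl t⟩
        rcases lt_or_gt_of_ne hdt with hneg | hpos
        · rw [caseN hu hm2.1.2 (neg_on_Ioo_right hd hnz hneg), max_eq_right hneg.le]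
        · rw [caseP hd hu hint hm2I ht hm2.1.2 (pos_on_Ioo_right hd hnz hpos),
            hm2.2, max_eq_left hpos.le]
          ring
    rw [hsplit, hfirst, hmid, hthird]
    ring
  · have hnz : ∀ s ∈ Icc a t, d s ≠ 0 := fun s hs h => hZ ⟨s, hs, h⟩
    rcases eq_or_lt_of_le ht.1 with heq | hlt
    · rw [← heq, intervalIntegral.integral_same]
      simp
    · have hda : d a ≠ 0 := hnz a ⟨le_refl a, ht.1⟩
      rcases lt_or_gt_of_ne hda with hneg | hpos
      · have hdt : d t < 0 := by
          rcases lt_or_gt_of_ne (hnz t ⟨ht.1, le_refl t⟩) with h | h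
          · exact h
          · obtain ⟨c, hc, hdc⟩ := intermediate_value_Icc ht.1 hd.continuousOn
              (show (0:ℝ) ∈ Icc (d a) (d t) from ⟨hneg.le, h.le⟩)
            exact absurd hdc (hnz c hc)
        rw [caseN hu ht.1 (neg_on_Ioo_left hd
          (fun s hs => hnz s ⟨hs.1, hs.2.le⟩) hneg),
          max_eq_right hneg.le, max_eq_right hdt.le]
        simp
      · have hdt : 0 < d t := by
          rcases lt_or_gt_of_ne (hnz t ⟨ht.1, le_refl t⟩) with h | h
          · obtain ⟨c, hc, hdc⟩ := intermediate_value_Icc' ht.1 hd.continuousOn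
              (show (0:ℝ) ∈ Icc (d t) (d a) from ⟨h.le, hpos.le⟩)
            exact absurd hdc (hnz c hc)
          · exact h
        rw [caseP hd hu hint haI ht ht.1 (pos_on_Ioo_left hd
          (fun s hs => hnz s ⟨hs.1, hs.2.le⟩) hpos),
          max_eq_left hpos.le, max_eq_left hdt.le]

lemma key' (hab : a ≤ b) (hd : Continuous d) (hu : IntegrableOn u (Icc a b))
    (hint : ∀ x ∈ Icc a b, d x = d a + ∫ s in a..x, u s)
    {t : ℝ} (ht : t ∈ Icc a b) :
    ∫ s in a..t, (if 0 ≤ d s then u s else 0) = max (d t) 0 - max (d a) 0 := by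
  have hmint : ∀ x ∈ Icc a b, -(d x) = -(d a) + ∫ s in a..x, -(u s) := by
    intro x hx
    rw [intervalIntegral.integral_neg, hint x hx]
    ring
  have hI2 : (∫ s in a..t, ({z | 0 < -(d z)}.indicator (fun z => -(u z)) s))
      = max (-(d t)) 0 - max (-(d a)) 0 := key hab hd.neg hu.neg hmint ht
  have hI3 : (∫ s in a..t, u s) = d t - d a := by
    rw [hint t ht]; ring
  have hptwise : ∀ s, (if 0 ≤ d s then u s else 0)
      = u s + ({z | 0 < -(d z)}.indicator (fun z => -(u z)) s) := by
    intro s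
    by_cases h : 0 ≤ d s
    · rw [if_pos h, Set.indicator_of_notMem (show s ∉ {z | 0 < -(d z)} by
        simp only [Set.mem_setOf_eq, not_lt]; linarith)]
      ring
    · rw [if_neg h, Set.indicator_of_mem (show s ∈ {z | 0 < -(d z)} by
        simp only [Set.mem_setOf_eq]; linarith)]
      ring
  have hSmeas : MeasurableSet {z | 0 < -(d z)} :=
    measurableSet_lt measurable_const hd.neg.measurable
  have huind : IntegrableOn ({z | 0 < -(d z)}.indicator (fun z => -(u z))) (Icc a b) :=
    hu.neg.indicator hSmeas
  have hsplitInt : (∫ s in a..t, (if 0 ≤ d s then u s else 0))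
      = (∫ s in a..t, u s) + ∫ s in a..t, ({z | 0 < -(d z)}.indicator (fun z => -(u z)) s) := by
    rw [← intervalIntegral.integral_add (interval_integrable_sub hu (left_mem_Icc.mpr hab) ht)
      (interval_integrable_sub huind (left_mem_Icc.mpr hab) ht)]
    exact intervalIntegral.integral_congr (fun s _ => hptwise s)
  rw [hsplitInt, hI3, hI2]
  have e1 : ∀ x : ℝ, x + max (-x) 0 = max x 0 := by
    intro x
    rcases le_total x 0 with h | h
    · rw [max_eq_left (by linarith), max_eq_right h]; ring
    · rw [max_eq_right (by linarith), max_eq_left h]; ring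
  have := e1 (d t)
  have := e1 (d a)
  linarith


lemma sum_pair {S : Finset ℕ} {i j : ℕ} (hi : i ∈ S) (hj : j ∈ S) (hij : i ≠ j)
    (F G : ℕ → ℝ) (h1 : F i + F j = G i + G j)
    (h2 : ∀ k, k ≠ i → k ≠ j → F k = G k) :
    ∑ k ∈ S, F k = ∑ k ∈ S, G k := by
  classical
  have hj' : j ∈ S.erase i := Finset.mem_erase.mpr ⟨Ne.symm hij, hj⟩
  rw [← Finset.add_sum_erase S F hi, ← Finset.add_sum_erase S G hi,
      ← Finset.add_sum_erase _ F hj', ← Finset.add_sum_erase _ G hj']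
  have h3 : ∑ k ∈ (S.erase i).erase j, F k = ∑ k ∈ (S.erase i).erase j, G k := by
    apply Finset.sum_congr rfl
    intro k hk
    exact h2 k (Finset.mem_erase.mp (Finset.mem_erase.mp hk).2).1 (Finset.mem_erase.mp hk).1
  rw [h3]
  linarith

section Control

variable {N : ℕ} {T M : ℝ} {ξ0 : ℕ → ℝ}

lemma xbar_continuous {ξ : ℝ → ℕ → ℝ} (hc : ∀ k, Continuous fun t => ξ t k) :
    Continuous (xbar N ξ) :=
  continuous_const.mul (continuous_finset_sum _ (fun j _ => hc j))

lemma integrand_integrable (hT : 0 ≤ T) {α ξ : ℝ → ℕ → ℝ} (hα : IsAdmissible N T M α)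
    (hc : ∀ k, Continuous fun t => ξ t k) {i : ℕ} (hi : i ∈ Finset.Icc 1 N) :
    IntegrableOn (fun s => -(ξ s i) + (1 - α s i) * xbar N ξ s) (Icc 0 T) := by
  obtain ⟨C1, hC1⟩ := isCompact_Icc.exists_bound_of_continuousOn
    (f := fun t => ξ t i) ((hc i).continuousOn (s := Icc (0:ℝ) T))
  obtain ⟨C2, hC2⟩ := isCompact_Icc.exists_bound_of_continuousOn
    (f := xbar N ξ) ((xbar_continuous hc).continuousOn (s := Icc (0:ℝ) T))
  have hmeas : Measurable (fun s => -(ξ s i) + (1 - α s i) * xbar N ξ s) :=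
    ((hc i).measurable.neg).add
      ((measurable_const.sub (hα.1 i)).mul (xbar_continuous hc).measurable)
  apply MeasureTheory.Integrable.mono'
    (g := fun _ => C1 + C2)
    ((MeasureTheory.integrableOn_const_iff).mpr (Or.inr measure_Icc_lt_top))
    hmeas.aestronglyMeasurable
  rw [MeasureTheory.ae_restrict_iff' measurableSet_Icc]
  filter_upwards with s hs
  have hα01 := hα.2.1 s hs i hi
  have hb1 := hC1 s hs
  have hb2 := hC2 s hs
  simp only [Real.norm_eq_abs] at hb1 hb2 ⊢
  have e1 : |(-(ξ s i)) + (1 - α s i) * xbar N ξ s| ≤ |ξ s i| + |1 - α s i| * |xbar N ξ s| := by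
    calc |(-(ξ s i)) + (1 - α s i) * xbar N ξ s|
        ≤ |(-(ξ s i))| + |(1 - α s i) * xbar N ξ s| := abs_add_le _ _
      _ = |ξ s i| + |1 - α s i| * |xbar N ξ s| := by rw [abs_neg, abs_mul]
  have e2 : |1 - α s i| ≤ 1 := by
    rw [abs_le]; constructor <;> linarith [hα01.1, hα01.2]
  have e3 : |1 - α s i| * |xbar N ξ s| ≤ 1 * |xbar N ξ s| :=
    mul_le_mul_of_nonneg_right e2 (abs_nonneg _)
  have h0 : (0:ℝ) ≤ |xbar N ξ s| := abs_nonneg _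
  calc |(-(ξ s i)) + (1 - α s i) * xbar N ξ s|
      ≤ |ξ s i| + |1 - α s i| * |xbar N ξ s| := e1
    _ ≤ C1 + C2 := by nlinarith

lemma comparator (hT : 0 ≤ T) {i j : ℕ} (hi : i ∈ Finset.Icc 1 N) (hj : j ∈ Finset.Icc 1 N)
    (hij : i ≠ j) (h0 : ξ0 j ≤ ξ0 i) {α ξ : ℝ → ℕ → ℝ}
    (hα : IsAdmissible N T M α) (hξ : IsTrajectory N T α ξ0 ξ)
    (hc : ∀ k, Continuous fun t => ξ t k) :
    ∃ β η, IsAdmissible N T M β ∧ IsTrajectory N T β ξ0 η ∧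
      (∀ k, Continuous fun t => η t k) ∧
      migV N η T = migV N ξ T ∧
      (∀ t, η t i = max (ξ t i) (ξ t j)) ∧ (∀ t, η t j = min (ξ t i) (ξ t j)) ∧
      (∀ t k, k ≠ i → k ≠ j → η t k = ξ t k) := by
  classical
  set d : ℝ → ℝ := fun s => ξ s i - ξ s j with hddef
  set β : ℝ → ℕ → ℝ := fun t k =>
    if k = i then (if 0 ≤ d t then α t i else α t j)
    else if k = j then (if 0 ≤ d t then α t j else α t i) else α t k with hβdef
  set η : ℝ → ℕ → ℝ := fun t k =>
    if k = i then max (ξ t i) (ξ t j) else if k = j then min (ξ t i) (ξ t j)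
    else ξ t k with hηdef
  have hdc : Continuous d := (hc i).sub (hc j)
  have hdmeas : MeasurableSet {t : ℝ | 0 ≤ d t} :=
    (isClosed_le continuous_const hdc).measurableSet
  have hηi : ∀ t, η t i = max (ξ t i) (ξ t j) := fun t => by simp [hηdef]
  have hηj : ∀ t, η t j = min (ξ t i) (ξ t j) := fun t => by
    simp [hηdef, hij.symm]
  have hηk : ∀ t k, k ≠ i → k ≠ j → η t k = ξ t k := fun t k h1 h2 => by
    simp [hηdef, h1, h2]
  have hβi : ∀ t, β t i = if 0 ≤ d t then α t i else α t j := fun t => by simp [hβdef]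
  have hβj : ∀ t, β t j = if 0 ≤ d t then α t j else α t i := fun t => by
    simp [hβdef, hij.symm]
  have hβk : ∀ t k, k ≠ i → k ≠ j → β t k = α t k := fun t k h1 h2 => by
    simp [hβdef, h1, h2]
  -- continuity of η
  have hηc : ∀ k, Continuous fun t => η t k := by
    intro k
    by_cases h1 : k = i
    · rw [show (fun t => η t k) = fun t => max (ξ t i) (ξ t j) from
        funext fun t => by simp [hηdef, h1]]
      exact (hc i).max (hc j)
    · by_cases h2 : k = j
      · rw [show (fun t => η t k) = fun t => min (ξ t i) (ξ t j) from
          funext fun t => by simp [hηdef, h1, h2, hij.symm]]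
        exact (hc i).min (hc j)
      · rw [show (fun t => η t k) = fun t => ξ t k from
          funext fun t => by simp [hηdef, h1, h2]]
        exact hc k
  -- sums preserved
  have hsum_eq : ∀ s, ∑ k ∈ Finset.Icc 1 N, η s k = ∑ k ∈ Finset.Icc 1 N, ξ s k := by
    intro s
    apply sum_pair hi hj hij
    · rw [hηi, hηj, max_add_min]
    · intro k h1 h2; exact hηk s k h1 h2
  have hxbar_eq : ∀ s, xbar N η s = xbar N ξ s := by
    intro s; unfold xbar; rw [hsum_eq]
  -- migV preserved
  have hmig : migV N η T = migV N ξ T := by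
    unfold migV
    congr 1
    apply sum_pair hi hj hij
    · rw [hηi, hηj]
      rcases le_total (ξ T i) (ξ T j) with h | h
      · rw [max_eq_right h, min_eq_left h]; ring
      · rw [max_eq_left h, min_eq_right h]
    · intro k h1 h2; rw [hηk T k h1 h2]
  -- admissibility of β
  have hβadm : IsAdmissible N T M β := by
    refine ⟨?_, ?_, ?_⟩
    · intro k
      by_cases h1 : k = i
      · rw [show (fun t => β t k) = fun t => if 0 ≤ d t then α t i else α t j from
          funext fun t => by simp [hβdef, h1]]
        exact Measurable.ite hdmeas (hα.1 i) (hα.1 j)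
      · by_cases h2 : k = j
        · rw [show (fun t => β t k) = fun t => if 0 ≤ d t then α t j else α t i from
            funext fun t => by simp [hβdef, h1, h2, hij.symm]]
          exact Measurable.ite hdmeas (hα.1 j) (hα.1 i)
        · rw [show (fun t => β t k) = fun t => α t k from
            funext fun t => by simp [hβdef, h1, h2]]
          exact hα.1 k
    · intro t ht k hk
      by_cases h1 : k = i
      · rw [h1, hβi]
        split_ifs
        · exact hα.2.1 t ht i hi
        · exact hα.2.1 t ht j hj
      · by_cases h2 : k = j
        · rw [h2, hβj]
          split_ifs
          · exact hα.2.1 t ht j hj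
          · exact hα.2.1 t ht i hi
        · rw [hβk t k h1 h2]; exact hα.2.1 t ht k hk
    · intro t ht
      have : ∑ k ∈ Finset.Icc 1 N, β t k = ∑ k ∈ Finset.Icc 1 N, α t k := by
        apply sum_pair hi hj hij
        · rw [hβi, hβj]; split_ifs <;> ring
        · intro k h1 h2; exact hβk t k h1 h2
      rw [this]; exact hα.2.2 t ht
  -- trajectory integrands
  set f : ℝ → ℝ := fun s => -(ξ s i) + (1 - α s i) * xbar N ξ s with hfdef
  set g : ℝ → ℝ := fun s => -(ξ s j) + (1 - α s j) * xbar N ξ s with hgdef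
  set u : ℝ → ℝ := fun s => f s - g s with hudef
  have hfint : IntegrableOn f (Icc 0 T) := integrand_integrable hT hα hc hi
  have hgint : IntegrableOn g (Icc 0 T) := integrand_integrable hT hα hc hj
  have huint : IntegrableOn u (Icc 0 T) := hfint.sub hgint
  have h0T : (0:ℝ) ∈ Icc (0:ℝ) T := left_mem_Icc.mpr hT
  have hξ00 : ∀ k ∈ Finset.Icc 1 N, ξ 0 k = ξ0 k := by
    intro k hk
    have := hξ.2 0 h0T k hk
    rwa [intervalIntegral.integral_same, add_zero] at this
  have hd0 : d 0 = ξ0 i - ξ0 j := by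
    simp only [hddef]; rw [hξ00 i hi, hξ00 j hj]
  have hd0' : 0 ≤ d 0 := by rw [hd0]; linarith
  have hint : ∀ x ∈ Icc (0:ℝ) T, d x = d 0 + ∫ s in (0:ℝ)..x, u s := by
    intro x hx
    have e1 := hξ.2 x hx i hi
    have e2 := hξ.2 x hx j hj
    have e3 : (∫ s in (0:ℝ)..x, u s) = (∫ s in (0:ℝ)..x, f s) - ∫ s in (0:ℝ)..x, g s :=
      intervalIntegral.integral_sub (interval_integrable_sub hfint h0T hx)
        (interval_integrable_sub hgint h0T hx)
    rw [hd0, e3]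
    simp only [hddef]
    rw [e1, e2]
    ring
  -- the indicator integrand
  have hite_eq : (fun s => if 0 ≤ d s then u s else 0) = {s : ℝ | 0 ≤ d s}.indicator u := by
    funext s
    by_cases h : 0 ≤ d s <;> simp [Set.indicator, h]
  have hiteint : IntegrableOn (fun s => if 0 ≤ d s then u s else 0) (Icc 0 T) := by
    rw [hite_eq]; exact huint.indicator hdmeas
  -- max identities
  have hmax : ∀ s, max (ξ s i) (ξ s j) = ξ s j + max (d s) 0 := by
    intro s
    rcases le_total (ξ s j) (ξ s i) with h | h
    · rw [max_eq_left h, max_eq_left (by simp only [hddef]; linarith)]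
      simp only [hddef]; ring
    · rw [max_eq_right h, max_eq_right (by simp only [hddef]; linarith)]
      ring
  have hmin : ∀ s, min (ξ s i) (ξ s j) = ξ s i - max (d s) 0 := by
    intro s
    rcases le_total (ξ s j) (ξ s i) with h | h
    · rw [min_eq_right h, max_eq_left (by simp only [hddef]; linarith)]
      simp only [hddef]; ring
    · rw [min_eq_left h, max_eq_right (by simp only [hddef]; linarith)]
      ring
  -- trajectory property of η
  have hηtraj : IsTrajectory N T β ξ0 η := by
    constructor
    · exact fun k => (hηc k).continuousOn
    · intro t ht k hk
      have hkey := key' hT hdc huint hint ht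
      have hmax0 : max (d 0) 0 = ξ0 i - ξ0 j := by
        rw [max_eq_left hd0', hd0]
      by_cases h1 : k = i
      · rw [h1]
        have hptwise : ∀ s, g s + (if 0 ≤ d s then u s else 0)
            = -(η s i) + (1 - β s i) * xbar N η s := by
          intro s
          rw [hxbar_eq s, hηi s, hβi s]
          by_cases h : 0 ≤ d s
          · rw [if_pos h, if_pos h, max_eq_left (show ξ s j ≤ ξ s i by
              simp only [hddef] at h; linarith)]
            simp only [hudef, hfdef, hgdef]; ring
          · rw [if_neg h, if_neg h, max_eq_right (show ξ s i ≤ ξ s j by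
              push_neg at h; simp only [hddef] at h; linarith)]
            simp only [hgdef]; ring
        have hadd : (∫ s in (0:ℝ)..t, (g s + if 0 ≤ d s then u s else 0))
            = (∫ s in (0:ℝ)..t, g s) + ∫ s in (0:ℝ)..t, (if 0 ≤ d s then u s else 0) :=
          intervalIntegral.integral_add (interval_integrable_sub hgint h0T ht)
            (interval_integrable_sub hiteint h0T ht)
        have hcongr : (∫ s in (0:ℝ)..t, (-(η s i) + (1 - β s i) * xbar N η s))
            = ∫ s in (0:ℝ)..t, (g s + if 0 ≤ d s then u s else 0) :=
          intervalIntegral.integral_congr (fun s _ => (hptwise s).symm)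
        rw [hcongr, hadd, hkey, hmax0, hηi, hmax t, hξ.2 t ht j hj]
        simp only [hgdef]
        ring
      · by_cases h2 : k = j
        · rw [h2]
          have hptwise : ∀ s, f s - (if 0 ≤ d s then u s else 0)
              = -(η s j) + (1 - β s j) * xbar N η s := by
            intro s
            rw [hxbar_eq s, hηj s, hβj s]
            by_cases h : 0 ≤ d s
            · rw [if_pos h, if_pos h, min_eq_right (show ξ s j ≤ ξ s i by
                simp only [hddef] at h; linarith)]
              simp only [hudef, hfdef, hgdef]; ring
            · rw [if_neg h, if_neg h, min_eq_left (show ξ s i ≤ ξ s j by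
                push_neg at h; simp only [hddef] at h; linarith)]
              simp only [hfdef]; ring
          have hadd : (∫ s in (0:ℝ)..t, (f s - if 0 ≤ d s then u s else 0))
              = (∫ s in (0:ℝ)..t, f s) - ∫ s in (0:ℝ)..t, (if 0 ≤ d s then u s else 0) :=
            intervalIntegral.integral_sub (interval_integrable_sub hfint h0T ht)
              (interval_integrable_sub hiteint h0T ht)
          have hcongr : (∫ s in (0:ℝ)..t, (-(η s j) + (1 - β s j) * xbar N η s))
              = ∫ s in (0:ℝ)..t, (f s - if 0 ≤ d s then u s else 0) :=
            intervalIntegral.integral_congr (fun s _ => (hptwise s).symm)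
          rw [hcongr, hadd, hkey, hmax0, hηj, hmin t, hξ.2 t ht i hi]
          simp only [hfdef]
          ring
        · have hptwise : ∀ s, -(ξ s k) + (1 - α s k) * xbar N ξ s
              = -(η s k) + (1 - β s k) * xbar N η s := by
            intro s
            rw [hxbar_eq s, hηk s k h1 h2, hβk s k h1 h2]
          have hcongr : (∫ s in (0:ℝ)..t, (-(η s k) + (1 - β s k) * xbar N η s))
              = ∫ s in (0:ℝ)..t, (-(ξ s k) + (1 - α s k) * xbar N ξ s) :=
            intervalIntegral.integral_congr (fun s _ => (hptwise s).symm)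
          rw [hηk t k h1 h2, hcongr]
          exact hξ.2 t ht k hk
  exact ⟨β, η, hβadm, hηtraj, hηc, hmig, hηi, hηj, hηk⟩

lemma clamp (hT : 0 ≤ T) {α ξ : ℝ → ℕ → ℝ} (hξ : IsTrajectory N T α ξ0 ξ) :
    ∃ ξ', IsTrajectory N T α ξ0 ξ' ∧ (∀ k, Continuous fun t => ξ' t k) ∧
      ∀ t ∈ Icc (0:ℝ) T, ∀ k, ξ' t k = ξ t k := by
  set proj : ℝ → ℝ := fun t => max 0 (min t T) with hproj
  have hprojc : Continuous proj := continuous_const.max (continuous_id.min continuous_const)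
  have hprojmem : ∀ t, proj t ∈ Icc (0:ℝ) T := fun t =>
    ⟨le_max_left _ _, max_le hT (min_le_right _ _)⟩
  have hprojid : ∀ t ∈ Icc (0:ℝ) T, proj t = t := by
    intro t ht
    simp only [hproj]
    rw [min_eq_left ht.2, max_eq_right ht.1]
  have hcont : ∀ k, Continuous fun t => ξ (proj t) k := fun k =>
    ContinuousOn.comp_continuous (hξ.1 k) hprojc hprojmem
  refine ⟨fun t k => ξ (proj t) k, ⟨fun k => (hcont k).continuousOn, ?_⟩,
    hcont, fun t ht k => show ξ (proj t) k = ξ t k by rw [hprojid t ht]⟩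
  intro t ht k hk
  have hxb : ∀ s ∈ Icc (0:ℝ) T, xbar N (fun t k => ξ (proj t) k) s = xbar N ξ s := by
    intro s hs
    unfold xbar
    congr 1
    apply Finset.sum_congr rfl
    intro l _
    show ξ (proj s) l = ξ s l
    rw [hprojid s hs]
  have hcongr : (∫ s in (0:ℝ)..t,
      (-(ξ (proj s) k) + (1 - α s k) * xbar N (fun t k => ξ (proj t) k) s))
      = ∫ s in (0:ℝ)..t, (-(ξ s k) + (1 - α s k) * xbar N ξ s) := by
    apply intervalIntegral.integral_congr
    intro s hs
    rw [uIcc_of_le ht.1] at hs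
    have hsT : s ∈ Icc (0:ℝ) T := ⟨hs.1, hs.2.trans ht.2⟩
    show -(ξ (proj s) k) + (1 - α s k) * xbar N (fun t k => ξ (proj t) k) s
      = -(ξ s k) + (1 - α s k) * xbar N ξ s
    rw [hprojid s hsT, hxb s hsT]
  show ξ (proj t) k = _
  rw [hprojid t ht, hcongr]
  exact hξ.2 t ht k hk

lemma mig_congr {ξ ξ' : ℝ → ℕ → ℝ} {t : ℝ} (h : ∀ k, ξ' t k = ξ t k) :
    migV N ξ' t = migV N ξ t := by
  unfold migV
  congr 1
  exact Finset.sum_congr rfl (fun k _ => by rw [h k])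

end Control

end OrdCtrl

open OrdCtrl in
/-- If the initial state is ordered and an optimal control for the final cost exists, then
there is an optimal control whose trajectory remains ordered on all of `[0,T]`. -/
theorem exists_ordered_optimal_control
    (N : ℕ) (hN : 1 ≤ N) (T M : ℝ) (hT : 0 < T) (hM : 0 < M) (ξ0 : ℕ → ℝ)
    (hord : ∀ i ∈ Finset.Icc 1 N, ∀ j ∈ Finset.Icc 1 N, i ≤ j → ξ0 j ≤ ξ0 i)
    (hex : ∃ α ξ, IsOptimalFinal N T M ξ0 α ξ) :
    ∃ α ξ, IsOptimalFinal N T M ξ0 α ξ ∧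
      ∀ t ∈ Set.Icc (0 : ℝ) T, ∀ i ∈ Finset.Icc 1 N, ∀ j ∈ Finset.Icc 1 N,
        i < j → ξ t j ≤ ξ t i := by
  have hT' : (0:ℝ) ≤ T := hT.le
  have hTmem : T ∈ Set.Icc (0:ℝ) T := ⟨hT', le_refl T⟩
  set Good : (ℝ → ℕ → ℝ) → (ℝ → ℕ → ℝ) → Prop := fun α ξ =>
    IsOptimalFinal N T M ξ0 α ξ ∧ ∀ k, Continuous fun t => ξ t k with hGood
  -- initial good pair
  have hinit : ∃ α ξ, Good α ξ := by
    obtain ⟨α, ξ, hopt⟩ := hex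
    obtain ⟨ξ', htraj', hcont', heq'⟩ := clamp hT' hopt.2.1
    refine ⟨α, ξ', ⟨⟨hopt.1, htraj', ?_⟩, hcont'⟩⟩
    intro β η hβ hη
    rw [mig_congr (heq' T hTmem)]
    exact hopt.2.2 β η hβ hη
  -- step: comparator application
  have hstep : ∀ α ξ, Good α ξ → ∀ i ∈ Finset.Icc 1 N, ∀ j ∈ Finset.Icc 1 N,
      i < j →
      ∃ β η, Good β η ∧
        (∀ t, η t i = max (ξ t i) (ξ t j)) ∧ (∀ t, η t j = min (ξ t i) (ξ t j)) ∧
        (∀ t k, k ≠ i → k ≠ j → η t k = ξ t k) := by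
    intro α ξ hg i hi j hj hij
    obtain ⟨β, η, hβadm, hηtraj, hηc, hmig, hηi, hηj, hηk⟩ :=
      comparator hT' hi hj (Nat.ne_of_lt hij) (hord i hi j hj hij.le)
        hg.1.1 hg.1.2.1 hg.2
    refine ⟨β, η, ⟨⟨hβadm, hηtraj, ?_⟩, hηc⟩, hηi, hηj, hηk⟩
    intro γ ζ hγ hζ
    rw [hmig]
    exact hg.1.2.2 γ ζ hγ hζ
  -- outer induction
  have hmain : ∀ kk : ℕ, ∃ α ξ, Good α ξ ∧
      ∀ t, ∀ i ∈ Finset.Icc 1 N, ∀ j ∈ Finset.Icc 1 N, i < j → i ≤ kk → ξ t j ≤ ξ t i := by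
    intro kk
    induction kk with
    | zero =>
      obtain ⟨α, ξ, hg⟩ := hinit
      exact ⟨α, ξ, hg, fun t i hi j hj hij hi0 => absurd (Finset.mem_Icc.mp hi).1
        (by omega)⟩
    | succ k ih =>
      obtain ⟨α, ξ, hg, hpre⟩ := ih
      by_cases hkN : k + 1 ≤ N
      · -- inner induction on n : order positions k+2 .. k+1+n below position k+1
        have hk1 : k + 1 ∈ Finset.Icc 1 N := Finset.mem_Icc.mpr ⟨by omega, hkN⟩
        have hinner : ∀ n : ℕ, ∃ α' ξ', Good α' ξ' ∧
            (∀ t, ∀ i ∈ Finset.Icc 1 N, ∀ j ∈ Finset.Icc 1 N, i < j → i ≤ k → ξ' t j ≤ ξ' t i) ∧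
            (∀ t j, k + 1 < j → j ≤ k + 1 + n → j ≤ N → ξ' t j ≤ ξ' t (k+1)) := by
          intro n
          induction n with
          | zero =>
            exact ⟨α, ξ, hg, hpre, fun t j h1 h2 _ => absurd h1 (by omega)⟩
          | succ n ih2 =>
            obtain ⟨α', ξ', hg', hpre', hinn'⟩ := ih2
            by_cases hmN : k + 2 + n ≤ N
            · have hmm : k + 2 + n ∈ Finset.Icc 1 N := Finset.mem_Icc.mpr ⟨by omega, hmN⟩
              obtain ⟨β, η, hgβ, hηi, hηj, hηk⟩ := hstep α' ξ' hg' (k+1) hk1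
                (k+2+n) hmm (by omega)
              refine ⟨β, η, hgβ, ?_, ?_⟩
              · -- prefix preserved
                intro t i hi j hj hij hik
                have hii : η t i = ξ' t i := hηk t i (by omega) (by omega)
                rcases eq_or_ne j (k+1) with rfl | hj1
                · rw [hii, hηi]
                  exact max_le (hpre' t i hi (k+1) hk1 hij hik)
                    (hpre' t i hi (k+2+n) hmm (by omega) hik)
                · rcases eq_or_ne j (k+2+n) with rfl | hj2
                  · rw [hii, hηj]
                    exact le_trans (min_le_right _ _) (hpre' t i hi (k+2+n) hmm (by omega) hik)
                  · rw [hii, hηk t j hj1 hj2]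
                    exact hpre' t i hi j hj hij hik
              · -- inner extended
                intro t j h1 h2 h3
                rw [hηi]
                rcases eq_or_ne j (k+2+n) with rfl | hj2
                · rw [hηj]
                  exact le_trans (min_le_max) (le_refl _)
                · rw [hηk t j (by omega) hj2]
                  exact le_trans (hinn' t j h1 (by omega) h3) (le_max_left _ _)
            · refine ⟨α', ξ', hg', hpre', ?_⟩
              intro t j h1 h2 h3
              exact hinn' t j h1 (by omega) h3
        obtain ⟨α', ξ', hg', hpre', hinn'⟩ := hinner N
        refine ⟨α', ξ', hg', ?_⟩
        intro t i hi j hj hij hik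
        rcases eq_or_ne i (k+1) with rfl | hik1
        · exact hinn' t j hij (by have := (Finset.mem_Icc.mp hj).2; omega) (Finset.mem_Icc.mp hj).2
        · exact hpre' t i hi j hj hij (by omega)
      · refine ⟨α, ξ, hg, ?_⟩
        intro t i hi j hj hij hik
        have := (Finset.mem_Icc.mp hi).2
        have := (Finset.mem_Icc.mp hj).2
        rcases Nat.lt_or_ge i (k+1) with h | h
        · exact hpre t i hi j hj hij (by omega)
        · omega
  obtain ⟨α, ξ, hg, hord'⟩ := hmain N
  exact ⟨α, ξ, hg.1, fun t _ i hi j hj hij => hord' t i hi j hj hij (Finset.mem_Icc.mp hi).2⟩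

end
end

section
/- Let N = 2 and M ∈ (0,2], and suppose ξ⁰_1 = ξ⁰_2 with ξ̄(0) > 0. Then an admissible control α is optimal for the final cost if and only if α_1(t) + α_2(t) = M for almost every t ∈ [0,T] and its trajectory satisfies ξ_1(T) = ξ_2(T). -/
open MeasureTheory Real

noncomputable section

/-- An admissible control for two agents: measurable, valued in `[0,1]` on `[0,T]`,
with `α_1(t) + α_2(t) ≤ M` for every `t ∈ [0,T]`. -/
def IsAdmissible2 (T M : ℝ) (α : ℝ → ℕ → ℝ) : Prop :=
  (∀ i, Measurable fun t => α t i) ∧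
  (∀ t ∈ Set.Icc (0 : ℝ) T, ∀ i ∈ Finset.Icc 1 2, 0 ≤ α t i ∧ α t i ≤ 1) ∧
  (∀ t ∈ Set.Icc (0 : ℝ) T, α t 1 + α t 2 ≤ M)

/-- The mean `ξ̄ = (ξ_1 + ξ_2)/2`. -/
def xbar2 (ξ : ℝ → ℕ → ℝ) (s : ℝ) : ℝ := (ξ s 1 + ξ s 2) / 2

/-- The trajectory of a control `α` with initial state `ξ0`. -/
def IsTrajectory2 (T : ℝ) (α : ℝ → ℕ → ℝ) (ξ0 : ℕ → ℝ) (ξ : ℝ → ℕ → ℝ) : Prop :=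
  (∀ i, ContinuousOn (fun t => ξ t i) (Set.Icc 0 T)) ∧
  (∀ t ∈ Set.Icc (0 : ℝ) T, ∀ i ∈ Finset.Icc 1 2,
    ξ t i = ξ0 i + ∫ s in (0 : ℝ)..t, (-(ξ s i) + (1 - α s i) * xbar2 ξ s))

/-- The migration functional `𝕍(t) = (ξ_1(t)² + ξ_2(t)²)/2`. -/
def migV2 (ξ : ℝ → ℕ → ℝ) (t : ℝ) : ℝ := ((ξ t 1) ^ 2 + (ξ t 2) ^ 2) / 2

/-- `α` (with trajectory `ξ`) is optimal for the final cost `𝕍(T)`. -/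
def IsOptimalFinal2 (T M : ℝ) (ξ0 : ℕ → ℝ) (α ξ : ℝ → ℕ → ℝ) : Prop :=
  IsAdmissible2 T M α ∧ IsTrajectory2 T α ξ0 ξ ∧
  ∀ β η, IsAdmissible2 T M β → IsTrajectory2 T β ξ0 η → migV2 ξ T ≤ migV2 η T

open intervalIntegral

lemma intInt {g : ℝ → ℝ} {C : ℝ} (hg : Measurable g)
    (hb : ∀ s, |g s| ≤ C) (a b : ℝ) : IntervalIntegrable g volume a b := by
  constructor <;>
  · apply Measure.integrableOn_of_bounded (M := C) measure_Ioc_lt_top.ne hg.aestronglyMeasurable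
    exact Filter.Eventually.of_forall (fun x => by simpa using hb x)

lemma abs_exp_sub_exp {a b K : ℝ} (ha : |a| ≤ K) (hb : |b| ≤ K) :
    |Real.exp a - Real.exp b| ≤ Real.exp K * |a - b| := by
  wlog h : b ≤ a generalizing a b
  · rw [abs_sub_comm, abs_sub_comm a b]; exact this hb ha (le_of_not_ge h)
  have huv : Real.exp (a - b) * Real.exp (b - a) = 1 := by
    rw [← Real.exp_add]; ring_nf; exact Real.exp_zero
  have hv : b - a + 1 ≤ Real.exp (b - a) := Real.add_one_le_exp _
  have h3 : Real.exp (a - b) - 1 ≤ (a - b) * Real.exp (a - b) := by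
    nlinarith [Real.exp_pos (a - b), Real.exp_pos (b - a)]
  have hba : Real.exp b * Real.exp (a - b) = Real.exp a := by
    rw [← Real.exp_add]; ring_nf
  have h1 : Real.exp a - Real.exp b ≤ Real.exp K * (a - b) := by
    have h2 : Real.exp a - Real.exp b = Real.exp b * (Real.exp (a - b) - 1) := by
      rw [mul_sub, hba, mul_one]
    have h4 : Real.exp a ≤ Real.exp K := Real.exp_le_exp.2 (abs_le.1 ha).2
    nlinarith [Real.exp_pos b, sub_nonneg.2 h]
  rw [abs_of_nonneg (sub_nonneg.2 (Real.exp_le_exp.2 h)), abs_of_nonneg (sub_nonneg.2 h)]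
  exact h1

lemma eq_of_forall_abs_le {x Q : ℝ} (hQ : 0 < Q) (h : ∀ ε : ℝ, 0 < ε → ε ≤ 1 → |x| ≤ Q * ε) :
    x = 0 := by
  by_contra hx
  have hx' : 0 < |x| := abs_pos.2 hx
  have hε0 : 0 < min 1 (|x| / (2 * Q)) := lt_min one_pos (by positivity)
  have h1 := h _ hε0 (min_le_left _ _)
  have h2 : Q * min 1 (|x| / (2 * Q)) ≤ Q * (|x| / (2 * Q)) :=
    mul_le_mul_of_nonneg_left (min_le_right _ _) hQ.le
  have h3 : Q * (|x| / (2 * Q)) = |x| / 2 := by field_simp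
  linarith

lemma expFTC (T C : ℝ) (hC : 0 ≤ C) {g : ℝ → ℝ} (hg : Measurable g)
    (hb : ∀ s, |g s| ≤ C) (hsupp : ∀ s, s ∉ Set.Icc 0 T → g s = 0)
    {t : ℝ} (ht : t ∈ Set.Icc 0 T) :
    Real.exp (∫ s in (0:ℝ)..t, g s) =
      1 + ∫ s in (0:ℝ)..t, g s * Real.exp (∫ r in (0:ℝ)..s, g r) := by
  obtain ⟨ht1, ht2⟩ := ht
  have hT : 0 ≤ T := le_trans ht1 ht2
  have hgind : g = (Set.Icc (0:ℝ) T).indicator g := by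
    ext s
    by_cases hs : s ∈ Set.Icc (0:ℝ) T
    · simp [Set.indicator_of_mem hs]
    · simp [Set.indicator_of_notMem hs, hsupp s hs]
  have hgInt : Integrable g volume := by
    rw [hgind, integrable_indicator_iff measurableSet_Icc]
    apply Measure.integrableOn_of_bounded (M := C) measure_Icc_lt_top.ne hg.aestronglyMeasurable
    exact Filter.Eventually.of_forall (fun x => by simpa using hb x)
  set G : ℝ → ℝ := fun u => ∫ s in (0:ℝ)..u, g s with hGdef
  have hGcont : Continuous G :=
    intervalIntegral.continuous_primitive (fun a b => intInt hg hb a b) 0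
  have hGb : ∀ s, 0 ≤ s → s ≤ T → |G s| ≤ C * T := by
    intro s hs1 hs2
    have h1 : |G s| ≤ ∫ r in (0:ℝ)..s, |g r| :=
      intervalIntegral.abs_integral_le_integral_abs hs1
    have h2 : (∫ r in (0:ℝ)..s, |g r|) ≤ ∫ r in (0:ℝ)..s, C := by
      apply intervalIntegral.integral_mono_on hs1 ((intInt hg hb 0 s).abs)
        intervalIntegrable_const
      intro x _; exact hb x
    rw [intervalIntegral.integral_const, smul_eq_mul, sub_zero, mul_comm] at h2
    calc |G s| ≤ C * s := le_trans h1 h2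
      _ ≤ C * T := mul_le_mul_of_nonneg_left hs2 hC
  set K := C * T + 1 with hKdef
  have hCTK : C * T ≤ K := by simp [hKdef]
  set Q := Real.exp K * (3 + K) with hQdef
  have hEpos : 0 < Real.exp K := Real.exp_pos K
  have hKpos : 0 < K := by positivity
  have hQpos : 0 < Q := by positivity
  rw [← sub_eq_zero]
  apply eq_of_forall_abs_le hQpos
  intro ε hε hε1
  obtain ⟨h, hhsupp, hδ, hhcont, hhInt⟩ :=
    hgInt.exists_hasCompactSupport_integral_sub_le hε
  set δ := ∫ x, ‖g x - h x‖ with hδdef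
  have hδ0 : 0 ≤ δ := integral_nonneg (fun x => norm_nonneg _)
  have hδ1 : δ ≤ 1 := le_trans hδ hε1
  have hghInt : Integrable (fun x => g x - h x) volume := hgInt.sub hhInt
  set H : ℝ → ℝ := fun u => ∫ s in (0:ℝ)..u, h s with hHdef
  have hHderiv : ∀ u : ℝ, HasDerivAt H (h u) u := fun u =>
    intervalIntegral.integral_hasDerivAt_right (hhInt.intervalIntegrable)
      (hhcont.stronglyMeasurableAtFilter _ _) hhcont.continuousAt
  have hHcont : Continuous H := continuous_iff_continuousAt.2 fun u => (hHderiv u).continuousAt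
  have heqH : (∫ s in (0:ℝ)..t, h s * Real.exp (H s)) = Real.exp (H t) - 1 := by
    have hderiv : ∀ x ∈ Set.uIcc (0:ℝ) t,
        HasDerivAt (fun u => Real.exp (H u)) (h x * Real.exp (H x)) x := by
      intro x _
      simpa [mul_comm] using (hHderiv x).exp
    have hint : IntervalIntegrable (fun s => h s * Real.exp (H s)) volume 0 t :=
      (hhcont.mul (Real.continuous_exp.comp hHcont)).intervalIntegrable 0 t
    rw [intervalIntegral.integral_eq_sub_of_hasDerivAt hderiv hint]
    simp [hHdef]
  have hIgh : ∀ s : ℝ, 0 ≤ s → (∫ r in (0:ℝ)..s, |g r - h r|) ≤ δ := by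
    intro s hs
    rw [intervalIntegral.integral_of_le hs]
    have hd : δ = ∫ x, |g x - h x| := by simp [hδdef, Real.norm_eq_abs]
    rw [hd]
    exact setIntegral_le_integral hghInt.abs
      (Filter.Eventually.of_forall fun x => abs_nonneg _)
  have hGH : ∀ s : ℝ, 0 ≤ s → |G s - H s| ≤ δ := by
    intro s hs
    have h1 : G s - H s = ∫ r in (0:ℝ)..s, (g r - h r) :=
      (intervalIntegral.integral_sub hgInt.intervalIntegrable
        hhInt.intervalIntegrable).symm
    rw [h1]
    exact le_trans (intervalIntegral.abs_integral_le_integral_abs hs) (hIgh s hs)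
  have hGbK : ∀ s, 0 ≤ s → s ≤ T → |G s| ≤ K := fun s h1 h2 =>
    le_trans (hGb s h1 h2) hCTK
  have hHb : ∀ s, 0 ≤ s → s ≤ T → |H s| ≤ K := by
    intro s hs1 hs2
    have := abs_sub_abs_le_abs_sub (H s) (G s)
    have h2 := hGH s hs1
    rw [abs_sub_comm] at h2
    have h3 := hGb s hs1 hs2
    simp only [hKdef]
    linarith
  have hptw : ∀ s, 0 ≤ s → s ≤ T →
      |g s * Real.exp (G s) - h s * Real.exp (H s)| ≤
        |g s - h s| * Real.exp K + |h s| * (Real.exp K * δ) := by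
    intro s hs1 hs2
    have e1 : g s * Real.exp (G s) - h s * Real.exp (H s)
        = (g s - h s) * Real.exp (G s) + h s * (Real.exp (G s) - Real.exp (H s)) := by ring
    rw [e1]
    refine le_trans (abs_add_le _ _) ?_
    have b1 : |(g s - h s) * Real.exp (G s)| ≤ |g s - h s| * Real.exp K := by
      rw [abs_mul, abs_of_pos (Real.exp_pos _)]
      exact mul_le_mul_of_nonneg_left
        (Real.exp_le_exp.2 (le_trans (le_abs_self _) (hGbK s hs1 hs2))) (abs_nonneg _)
    have b2 : |h s * (Real.exp (G s) - Real.exp (H s))| ≤ |h s| * (Real.exp K * δ) := by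
      rw [abs_mul]
      refine mul_le_mul_of_nonneg_left ?_ (abs_nonneg _)
      exact le_trans (abs_exp_sub_exp (hGbK s hs1 hs2) (hHb s hs1 hs2))
        (mul_le_mul_of_nonneg_left (hGH s hs1) hEpos.le)
    linarith
  have hint1 : IntervalIntegrable (fun s => g s * Real.exp (G s)) volume 0 t := by
    rw [intervalIntegrable_iff_integrableOn_Ioc_of_le ht1]
    apply Measure.integrableOn_of_bounded (M := C * Real.exp K) measure_Ioc_lt_top.ne
      ((hg.mul (Real.continuous_exp.comp hGcont).measurable).aestronglyMeasurable)
    refine (ae_restrict_mem measurableSet_Ioc).mono fun x hx => ?_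
    have hx1 : 0 ≤ x := hx.1.le
    have hx2 : x ≤ T := le_trans hx.2 ht2
    simp only [Pi.mul_apply, Function.comp_apply, Real.norm_eq_abs, abs_mul]
    rw [abs_of_pos (Real.exp_pos (G x))]
    exact mul_le_mul (hb x) (Real.exp_le_exp.2 (le_trans (le_abs_self _) (hGbK x hx1 hx2)))
      (Real.exp_pos _).le hC
  have hint2 : IntervalIntegrable (fun s => h s * Real.exp (H s)) volume 0 t :=
    (hhcont.mul (Real.continuous_exp.comp hHcont)).intervalIntegrable 0 t
  have hIabsgh : IntervalIntegrable (fun s => |g s - h s|) volume 0 t :=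
    hghInt.abs.intervalIntegrable
  have hIabsh : IntervalIntegrable (fun s => |h s|) volume 0 t :=
    hhInt.abs.intervalIntegrable
  have hInth : (∫ s in (0:ℝ)..t, |h s|) ≤ K := by
    have p1 : (∫ s in (0:ℝ)..t, |h s|) ≤ ∫ s in (0:ℝ)..t, (C + |g s - h s|) := by
      apply intervalIntegral.integral_mono_on ht1 hIabsh
        (intervalIntegrable_const.add hIabsgh)
      intro s _
      calc |h s| = |g s - (g s - h s)| := by ring_nf
        _ ≤ |g s| + |g s - h s| := abs_sub _ _
        _ ≤ C + |g s - h s| := by linarith [hb s]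
    have p2 : (∫ s in (0:ℝ)..t, (C + |g s - h s|))
        = C * t + ∫ s in (0:ℝ)..t, |g s - h s| := by
      rw [intervalIntegral.integral_add intervalIntegrable_const hIabsgh,
        intervalIntegral.integral_const, smul_eq_mul, sub_zero, mul_comm]
    have p3 : C * t ≤ C * T := mul_le_mul_of_nonneg_left ht2 hC
    have p4 := hIgh t ht1
    simp only [hKdef]
    linarith
  have hmain : |(∫ s in (0:ℝ)..t, g s * Real.exp (G s)) -
      ∫ s in (0:ℝ)..t, h s * Real.exp (H s)| ≤ Real.exp K * δ + K * (Real.exp K * δ) := by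
    rw [← intervalIntegral.integral_sub hint1 hint2]
    refine le_trans (intervalIntegral.abs_integral_le_integral_abs ht1) ?_
    have step1 : (∫ s in (0:ℝ)..t, |g s * Real.exp (G s) - h s * Real.exp (H s)|)
        ≤ ∫ s in (0:ℝ)..t, (|g s - h s| * Real.exp K + |h s| * (Real.exp K * δ)) := by
      apply intervalIntegral.integral_mono_on ht1 ((hint1.sub hint2).abs)
        ((hIabsgh.mul_const _).add (hIabsh.mul_const _))
      intro s hs; exact hptw s hs.1 (le_trans hs.2 ht2)
    have step2 : (∫ s in (0:ℝ)..t, (|g s - h s| * Real.exp K + |h s| * (Real.exp K * δ)))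
        = (∫ s in (0:ℝ)..t, |g s - h s|) * Real.exp K
          + (∫ s in (0:ℝ)..t, |h s|) * (Real.exp K * δ) := by
      rw [intervalIntegral.integral_add (hIabsgh.mul_const _) (hIabsh.mul_const _),
        intervalIntegral.integral_mul_const, intervalIntegral.integral_mul_const]
    have q1 : (∫ s in (0:ℝ)..t, |g s - h s|) * Real.exp K ≤ δ * Real.exp K :=
      mul_le_mul_of_nonneg_right (hIgh t ht1) hEpos.le
    have q2 : (∫ s in (0:ℝ)..t, |h s|) * (Real.exp K * δ) ≤ K * (Real.exp K * δ) :=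
      mul_le_mul_of_nonneg_right hInth (by positivity)
    rw [step2] at step1
    linarith
  have hexpGHt : |Real.exp (G t) - Real.exp (H t)| ≤ Real.exp K * δ :=
    le_trans (abs_exp_sub_exp (hGbK t ht1 ht2) (hHb t ht1 ht2))
      (mul_le_mul_of_nonneg_left (hGH t ht1) hEpos.le)
  calc |Real.exp (G t) - (1 + ∫ s in (0:ℝ)..t, g s * Real.exp (G s))|
      ≤ |Real.exp (G t) - Real.exp (H t)|
        + |Real.exp (H t) - (1 + ∫ s in (0:ℝ)..t, g s * Real.exp (G s))| := by
        have := abs_sub_le (Real.exp (G t)) (Real.exp (H t))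
          (1 + ∫ s in (0:ℝ)..t, g s * Real.exp (G s))
        linarith
    _ ≤ Real.exp K * δ + (Real.exp K * δ + K * (Real.exp K * δ)) := by
        refine add_le_add hexpGHt ?_
        have e2 : Real.exp (H t) - (1 + ∫ s in (0:ℝ)..t, g s * Real.exp (G s))
            = (∫ s in (0:ℝ)..t, h s * Real.exp (H s))
              - ∫ s in (0:ℝ)..t, g s * Real.exp (G s) := by
          rw [heqH]; ring
        rw [e2, abs_sub_comm]
        exact hmain
    _ ≤ Q * ε := by
        have : Real.exp K * δ ≤ Real.exp K * ε := mul_le_mul_of_nonneg_left hδ hEpos.le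
        have h2 : K * (Real.exp K * δ) ≤ K * (Real.exp K * ε) :=
          mul_le_mul_of_nonneg_left (mul_le_mul_of_nonneg_left hδ hEpos.le) hKpos.le
        simp only [hQdef]
        nlinarith

lemma ode_zero (T : ℝ) {k u : ℝ → ℝ} (hk : Measurable k) (hk1 : ∀ s, |k s| ≤ 1)
    (hu : ContinuousOn u (Set.Icc 0 T))
    (hEq : ∀ t ∈ Set.Icc (0:ℝ) T, u t = ∫ s in (0:ℝ)..t, k s * u s) :
    ∀ t ∈ Set.Icc (0:ℝ) T, u t = 0 := by
  obtain ⟨Kb, hKb⟩ := (isCompact_Icc : IsCompact (Set.Icc (0:ℝ) T)).exists_bound_of_continuousOn hu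
  have hki : ∀ τ ∈ Set.Icc (0:ℝ) T, IntervalIntegrable (fun s => k s * u s) volume 0 τ := by
    intro τ hτ
    apply (intInt hk hk1 0 τ).mul_continuousOn
    apply hu.mono
    rw [Set.uIcc_of_le hτ.1]
    exact Set.Icc_subset_Icc le_rfl hτ.2
  have key : ∀ n : ℕ, ∀ τ ∈ Set.Icc (0:ℝ) T, |u τ| ≤ Kb * τ ^ n / n.factorial := by
    intro n
    induction n with
    | zero =>
      intro τ hτ
      simpa using hKb τ hτ
    | succ n ih =>
      intro τ hτ
      rw [hEq τ hτ]
      have h1 : |∫ s in (0:ℝ)..τ, k s * u s| ≤ ∫ s in (0:ℝ)..τ, |k s * u s| :=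
        intervalIntegral.abs_integral_le_integral_abs hτ.1
      have h2 : (∫ s in (0:ℝ)..τ, |k s * u s|)
          ≤ ∫ s in (0:ℝ)..τ, Kb * s ^ n / n.factorial := by
        apply intervalIntegral.integral_mono_on hτ.1 ((hki τ hτ).abs)
          (Continuous.intervalIntegrable (by continuity) 0 τ)
        intro s hs
        have hsT : s ∈ Set.Icc (0:ℝ) T := ⟨hs.1, le_trans hs.2 hτ.2⟩
        calc |k s * u s| = |k s| * |u s| := abs_mul _ _
          _ ≤ 1 * (Kb * s ^ n / n.factorial) :=
            mul_le_mul (hk1 s) (ih s hsT) (abs_nonneg _)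
              zero_le_one
          _ = Kb * s ^ n / n.factorial := one_mul _
      have h3 : (∫ s in (0:ℝ)..τ, Kb * s ^ n / n.factorial)
          = Kb * τ ^ (n+1) / (n+1).factorial := by
        have e : (fun s : ℝ => Kb * s ^ n / n.factorial)
            = fun s : ℝ => (Kb / n.factorial) * s ^ n := by funext s; ring
        rw [e, intervalIntegral.integral_const_mul, integral_pow]
        have hf : ((n+1).factorial : ℝ) = (n+1) * n.factorial := by
          rw [Nat.factorial_succ]; push_cast; ring
        have hne : (n.factorial : ℝ) ≠ 0 := Nat.cast_ne_zero.2 n.factorial_ne_zero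
        have hne2 : ((n : ℝ) + 1) ≠ 0 := by positivity
        rw [hf, zero_pow (Nat.succ_ne_zero n), sub_zero]
        field_simp
      calc |∫ s in (0:ℝ)..τ, k s * u s| ≤ _ := h1
        _ ≤ _ := h2
        _ = Kb * τ ^ (n+1) / (n+1).factorial := h3
  intro t ht
  have hb : ∀ n : ℕ, |u t| ≤ Kb * (t ^ n / n.factorial) := by
    intro n
    rw [← mul_div_assoc]
    exact key n t ht
  have hlim : Filter.Tendsto (fun n : ℕ => Kb * (t ^ n / n.factorial))
      Filter.atTop (nhds 0) := by
    have := FloorSemiring.tendsto_pow_div_factorial_atTop (K := ℝ) t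
    simpa using this.const_mul Kb
  have h0 : |u t| ≤ 0 := ge_of_tendsto hlim (Filter.Eventually.of_forall hb)
  exact abs_eq_zero.1 (le_antisymm h0 (abs_nonneg _))

lemma ode_solution (T : ℝ) {k u : ℝ → ℝ} {u0 : ℝ} (hk : Measurable k)
    (hk1 : ∀ s, |k s| ≤ 1) (hsupp : ∀ s, s ∉ Set.Icc 0 T → k s = 0)
    (hu : ContinuousOn u (Set.Icc 0 T))
    (hEq : ∀ t ∈ Set.Icc (0:ℝ) T, u t = u0 + ∫ s in (0:ℝ)..t, k s * u s) :
    ∀ t ∈ Set.Icc (0:ℝ) T, u t = u0 * Real.exp (∫ s in (0:ℝ)..t, k s) := by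
  set G : ℝ → ℝ := fun τ => ∫ s in (0:ℝ)..τ, k s with hGdef
  have hGcont : Continuous G :=
    intervalIntegral.continuous_primitive (fun a b => intInt hk hk1 a b) 0
  set v : ℝ → ℝ := fun τ => u0 * Real.exp (G τ) with hvdef
  have hvcont : Continuous v := continuous_const.mul (Real.continuous_exp.comp hGcont)
  have hvEq : ∀ τ ∈ Set.Icc (0:ℝ) T, v τ = u0 + ∫ s in (0:ℝ)..τ, k s * v s := by
    intro τ hτ
    have hftc := expFTC T 1 zero_le_one hk hk1 hsupp hτ
    have e1 : (fun s => k s * v s) = fun s => u0 * (k s * Real.exp (G s)) := by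
      funext s; simp only [hvdef]; ring
    rw [e1, intervalIntegral.integral_const_mul]
    have hvτ : v τ = u0 * Real.exp (G τ) := rfl
    rw [hvτ, hftc]
    ring
  have hki : ∀ f : ℝ → ℝ, ContinuousOn f (Set.Icc 0 T) →
      ∀ τ ∈ Set.Icc (0:ℝ) T, IntervalIntegrable (fun s => k s * f s) volume 0 τ := by
    intro f hf τ hτ
    apply (intInt hk hk1 0 τ).mul_continuousOn
    apply hf.mono
    rw [Set.uIcc_of_le hτ.1]
    exact Set.Icc_subset_Icc le_rfl hτ.2
  have hDEq : ∀ τ ∈ Set.Icc (0:ℝ) T,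
      (fun σ => u σ - v σ) τ = ∫ s in (0:ℝ)..τ, k s * ((fun σ => u σ - v σ) s) := by
    intro τ hτ
    have e2 : (fun s => k s * (u s - v s)) = fun s => k s * u s - k s * v s := by
      funext s; ring
    simp only [e2]
    rw [intervalIntegral.integral_sub (hki u hu τ hτ) (hki v hvcont.continuousOn τ hτ)]
    have h1 := hEq τ hτ
    have h2 := hvEq τ hτ
    have hgoal : u τ - v τ
        = (∫ s in (0:ℝ)..τ, k s * u s) - ∫ s in (0:ℝ)..τ, k s * v s := by linarith
    exact hgoal
  have hz := ode_zero T hk hk1 (hu.sub hvcont.continuousOn) hDEq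
  intro t ht
  have h := hz t ht
  have he : u t = v t := by
    have : u t - v t = 0 := h
    linarith
  rw [he]

/-- The truncated coefficient `k` associated with a control. -/
def kfun (T : ℝ) (β : ℝ → ℕ → ℝ) (s : ℝ) : ℝ :=
  if s ∈ Set.Icc (0:ℝ) T then -(β s 1 + β s 2) / 2 else 0

lemma kfun_meas {T : ℝ} {β : ℝ → ℕ → ℝ} (hm : ∀ i, Measurable fun t => β t i) :
    Measurable (kfun T β) := by
  apply Measurable.ite measurableSet_Icc
  · exact (((hm 1).add (hm 2)).neg).div_const 2
  · exact measurable_const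

lemma kfun_bb {T M : ℝ} {β : ℝ → ℕ → ℝ} (hβ : IsAdmissible2 T M β) :
    ∀ s, |kfun T β s| ≤ 1 := by
  intro s
  unfold kfun
  by_cases hs : s ∈ Set.Icc (0:ℝ) T
  · obtain ⟨h1a, h1b⟩ := hβ.2.1 s hs 1 (by decide)
    obtain ⟨h2a, h2b⟩ := hβ.2.1 s hs 2 (by decide)
    rw [if_pos hs, abs_le]
    constructor <;> [linarith; linarith]
  · rw [if_neg hs]; simp

lemma kfun_supp {T : ℝ} {β : ℝ → ℕ → ℝ} :
    ∀ s, s ∉ Set.Icc (0:ℝ) T → kfun T β s = 0 := by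
  intro s hs; unfold kfun; rw [if_neg hs]

/-- The mean satisfies the closed-form exponential formula. -/
lemma mean_formula {T M : ℝ} {β η : ℝ → ℕ → ℝ} {ξ0 : ℕ → ℝ}
    (hβ : IsAdmissible2 T M β) (hη : IsTrajectory2 T β ξ0 η) :
    ∀ t ∈ Set.Icc (0:ℝ) T,
      (η t 1 + η t 2) / 2
        = (ξ0 1 + ξ0 2) / 2 * Real.exp (∫ s in (0:ℝ)..t, kfun T β s) := by
  obtain ⟨hηc, hηe⟩ := hη
  obtain ⟨hβm, hβ01, hβM⟩ := hβ
  set S : ℝ → ℝ := fun τ => (η τ 1 + η τ 2) / 2 with hSdef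
  have hScont : ContinuousOn S (Set.Icc 0 T) := ((hηc 1).add (hηc 2)).div_const 2
  -- integrability of the two drift terms
  have hIi : ∀ i ∈ Finset.Icc 1 2, ∀ t ∈ Set.Icc (0:ℝ) T,
      IntervalIntegrable (fun s => -(η s i) + (1 - β s i) * xbar2 η s) volume 0 t := by
    intro i hi t ht
    have hsub : Set.uIcc (0:ℝ) t ⊆ Set.Icc 0 T := by
      rw [Set.uIcc_of_le ht.1]; exact Set.Icc_subset_Icc le_rfl ht.2
    have hA : IntervalIntegrable (fun s => -(η s i)) volume 0 t :=
      (((hηc i).mono hsub).neg).intervalIntegrable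
    have hB1 : IntervalIntegrable (fun s => 1 - β s i) volume 0 t := by
      rw [intervalIntegrable_iff_integrableOn_Ioc_of_le ht.1]
      apply Measure.integrableOn_of_bounded (M := 1) measure_Ioc_lt_top.ne
        ((measurable_const.sub (hβm i)).aestronglyMeasurable)
      refine (ae_restrict_mem measurableSet_Ioc).mono fun x hx => ?_
      have hxI : x ∈ Set.Icc (0:ℝ) T := ⟨hx.1.le, le_trans hx.2 ht.2⟩
      obtain ⟨ha, hb⟩ := hβ01 x hxI i hi
      simp only [Pi.sub_apply]
      rw [Real.norm_eq_abs, abs_le]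
      constructor <;> [linarith; linarith]
    have hB : IntervalIntegrable (fun s => (1 - β s i) * xbar2 η s) volume 0 t := by
      apply hB1.mul_continuousOn
      have : ContinuousOn (xbar2 η) (Set.Icc 0 T) := ((hηc 1).add (hηc 2)).div_const 2
      exact this.mono hsub
    exact hA.add hB
  have hSeq : ∀ t ∈ Set.Icc (0:ℝ) T,
      S t = (ξ0 1 + ξ0 2) / 2 + ∫ s in (0:ℝ)..t, kfun T β s * S s := by
    intro t ht
    have h1 := hηe t ht 1 (by decide)
    have h2 := hηe t ht 2 (by decide)
    have hadd : (∫ s in (0:ℝ)..t, (-(η s 1) + (1 - β s 1) * xbar2 η s))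
          + (∫ s in (0:ℝ)..t, (-(η s 2) + (1 - β s 2) * xbar2 η s))
        = ∫ s in (0:ℝ)..t, ((-(η s 1) + (1 - β s 1) * xbar2 η s)
            + (-(η s 2) + (1 - β s 2) * xbar2 η s)) :=
      (intervalIntegral.integral_add (hIi 1 (by decide) t ht) (hIi 2 (by decide) t ht)).symm
    have hcongr : (∫ s in (0:ℝ)..t, ((-(η s 1) + (1 - β s 1) * xbar2 η s)
            + (-(η s 2) + (1 - β s 2) * xbar2 η s)))
        = ∫ s in (0:ℝ)..t, 2 * (kfun T β s * S s) := by
      apply intervalIntegral.integral_congr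
      intro s hs
      have hsI : s ∈ Set.Icc (0:ℝ) T := by
        rw [Set.uIcc_of_le ht.1] at hs
        exact ⟨hs.1, le_trans hs.2 ht.2⟩
      simp only [kfun, if_pos hsI, xbar2, hSdef]
      ring
    have h2int : IntervalIntegrable (fun s => kfun T β s * S s) volume 0 t := by
      apply (intInt (kfun_meas hβm) (kfun_bb ⟨hβm, hβ01, hβM⟩) 0 t).mul_continuousOn
      apply hScont.mono
      rw [Set.uIcc_of_le ht.1]; exact Set.Icc_subset_Icc le_rfl ht.2
    have hconst : (∫ s in (0:ℝ)..t, 2 * (kfun T β s * S s))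
        = 2 * ∫ s in (0:ℝ)..t, kfun T β s * S s :=
      intervalIntegral.integral_const_mul _ _
    have : S t = ((ξ0 1 + ξ0 2)
        + ((∫ s in (0:ℝ)..t, (-(η s 1) + (1 - β s 1) * xbar2 η s))
          + (∫ s in (0:ℝ)..t, (-(η s 2) + (1 - β s 2) * xbar2 η s)))) / 2 := by
      simp only [hSdef]
      rw [h1, h2]; ring
    rw [this, hadd, hcongr, hconst]
    ring
  exact ode_solution T (kfun_meas hβm) (kfun_bb ⟨hβm, hβ01, hβM⟩) kfun_supp hScont hSeq

lemma kint_low {T M : ℝ} (hT : 0 ≤ T) {β : ℝ → ℕ → ℝ} (hβ : IsAdmissible2 T M β) :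
    -(M * T) / 2 ≤ ∫ s in (0:ℝ)..T, kfun T β s := by
  have h1 : (∫ s in (0:ℝ)..T, (-(M/2) : ℝ)) ≤ ∫ s in (0:ℝ)..T, kfun T β s := by
    apply intervalIntegral.integral_mono_on hT intervalIntegrable_const
      (intInt (kfun_meas hβ.1) (kfun_bb hβ) 0 T)
    intro s hs
    have hM := hβ.2.2 s hs
    show -(M/2) ≤ kfun T β s
    unfold kfun
    rw [if_pos hs]
    linarith
  rw [intervalIntegral.integral_const, smul_eq_mul, sub_zero] at h1
  linarith

lemma competitor_adm (T M : ℝ) (hM0 : 0 < M) (hM2 : M ≤ 2) :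
    IsAdmissible2 T M (fun _ _ => M/2) := by
  refine ⟨fun i => measurable_const, ?_, ?_⟩
  · intro t _ i _; constructor <;> linarith
  · intro t _; linarith

lemma competitor_traj (T M : ℝ) (ξ0 : ℕ → ℝ) (heq : ξ0 1 = ξ0 2) :
    IsTrajectory2 T (fun _ _ => M/2) ξ0 (fun t _ => ξ0 1 * Real.exp (-(M/2) * t)) := by
  constructor
  · intro i
    exact (continuous_const.mul (Real.continuous_exp.comp (by continuity))).continuousOn
  · intro t ht i hi
    have hξ0i : ξ0 i = ξ0 1 := by
      obtain ⟨h1i, h2i⟩ := Finset.mem_Icc.1 hi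
      interval_cases i
      · rfl
      · exact heq.symm
    have hF : ∀ s : ℝ, HasDerivAt (fun σ : ℝ => ξ0 1 * Real.exp (-(M/2) * σ))
        (-((fun t _ => ξ0 1 * Real.exp (-(M/2) * t)) s i)
          + (1 - (fun _ _ => M/2) s i)
            * xbar2 (fun t _ => ξ0 1 * Real.exp (-(M/2) * t)) s) s := by
      intro s
      have h0 : HasDerivAt (fun σ : ℝ => -(M/2) * σ) (-(M/2)) s := by
        simpa using (hasDerivAt_id s).const_mul (-(M/2))
      have h1 := (h0.exp).const_mul (ξ0 1)
      convert h1 using 1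
      · rfl
      · rfl
      simp only [xbar2]
      ring
    have hint : IntervalIntegrable (fun s =>
        -((fun t _ => ξ0 1 * Real.exp (-(M/2) * t)) s i)
          + (1 - (fun _ _ => M/2) s i)
            * xbar2 (fun t _ => ξ0 1 * Real.exp (-(M/2) * t)) s) volume 0 t := by
      apply Continuous.intervalIntegrable
      apply Continuous.add
      · exact (continuous_const.mul (Real.continuous_exp.comp (by continuity))).neg
      · apply continuous_const.mul
        unfold xbar2
        exact ((continuous_const.mul (Real.continuous_exp.comp (by continuity))).add
          (continuous_const.mul (Real.continuous_exp.comp (by continuity)))).div_const 2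
    rw [intervalIntegral.integral_eq_sub_of_hasDerivAt (fun x _ => hF x) hint]
    simp only [hξ0i]
    rw [mul_zero, Real.exp_zero]
    ring

set_option maxHeartbeats 1000000 in
/-- Two agents, `M ∈ (0,2]`, equal initial states with positive mean: a control is optimal
for the final cost iff it uses full strength `α_1 + α_2 = M` a.e. and brings the two agents
together at the final time. -/
theorem two_agents_equal_initial
    (T M : ℝ) (hT : 0 < T) (hM0 : 0 < M) (hM2 : M ≤ 2)
    (ξ0 : ℕ → ℝ) (heq : ξ0 1 = ξ0 2) (hbar : 0 < (ξ0 1 + ξ0 2) / 2)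
    (α ξ : ℝ → ℕ → ℝ)
    (hα : IsAdmissible2 T M α) (hξ : IsTrajectory2 T α ξ0 ξ) :
    (∀ β η, IsAdmissible2 T M β → IsTrajectory2 T β ξ0 η → migV2 ξ T ≤ migV2 η T) ↔
      ((∀ᵐ t ∂volume, t ∈ Set.Icc (0 : ℝ) T → α t 1 + α t 2 = M) ∧ ξ T 1 = ξ T 2) := by
  set x0 : ℝ := (ξ0 1 + ξ0 2) / 2 with hx0def
  have hx0 : 0 < x0 := hbar
  have hx01 : x0 = ξ0 1 := by rw [hx0def, ← heq]; ring
  have hTmem : T ∈ Set.Icc (0:ℝ) T := ⟨hT.le, le_rfl⟩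
  set I : ℝ := ∫ s in (0:ℝ)..T, kfun T α s with hIdef
  have hSx : (ξ T 1 + ξ T 2) / 2 = x0 * Real.exp I := mean_formula hα hξ T hTmem
  have hVid : migV2 ξ T = ((ξ T 1 + ξ T 2) / 2) ^ 2 + ((ξ T 1 - ξ T 2) / 2) ^ 2 := by
    unfold migV2; ring
  have hexp2 : ∀ a : ℝ, Real.exp a ^ 2 = Real.exp (2 * a) := by
    intro a; rw [sq, ← Real.exp_add]; congr 1; ring
  have hV : migV2 ξ T = x0 ^ 2 * Real.exp (2 * I) + ((ξ T 1 - ξ T 2) / 2) ^ 2 := by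
    rw [hVid, hSx, mul_pow, hexp2]
  have hIlow : -(M * T) / 2 ≤ I := kint_low hT.le hα
  -- lower bound for any admissible pair
  have hlower : ∀ β η, IsAdmissible2 T M β → IsTrajectory2 T β ξ0 η →
      x0 ^ 2 * Real.exp (-(M * T)) ≤ migV2 η T := by
    intro β η hβ hη
    have hSy : (η T 1 + η T 2) / 2
        = x0 * Real.exp (∫ s in (0:ℝ)..T, kfun T β s) := mean_formula hβ hη T hTmem
    have hJ : -(M * T) / 2 ≤ ∫ s in (0:ℝ)..T, kfun T β s := kint_low hT.le hβ
    have hVη : migV2 η T = ((η T 1 + η T 2) / 2) ^ 2 + ((η T 1 - η T 2) / 2) ^ 2 := by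
      unfold migV2; ring
    have h1 : x0 ^ 2 * Real.exp (-(M * T)) ≤ ((η T 1 + η T 2) / 2) ^ 2 := by
      rw [hSy, mul_pow, hexp2]
      have he : Real.exp (-(M * T)) ≤ Real.exp (2 * (∫ s in (0:ℝ)..T, kfun T β s)) :=
        Real.exp_le_exp.2 (by linarith)
      nlinarith [sq_nonneg x0]
    nlinarith [sq_nonneg ((η T 1 - η T 2) / 2)]
  -- value of the explicit competitor
  have hVhat : migV2 (fun t _ => ξ0 1 * Real.exp (-(M/2) * t)) T
      = x0 ^ 2 * Real.exp (-(M * T)) := by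
    unfold migV2
    rw [← hx01]
    have : Real.exp (-(M/2) * T) ^ 2 = Real.exp (-(M * T)) := by
      rw [hexp2]; congr 1; ring
    nlinarith [this]
  constructor
  · intro hopt
    have hle := hopt _ _ (competitor_adm T M hM0 hM2) (competitor_traj T M ξ0 heq)
    rw [hVhat] at hle
    have hcmp : Real.exp (-(M * T)) ≤ Real.exp (2 * I) :=
      Real.exp_le_exp.2 (by linarith)
    have hcmp2 : x0 ^ 2 * Real.exp (-(M * T)) ≤ x0 ^ 2 * Real.exp (2 * I) :=
      mul_le_mul_of_nonneg_left hcmp (sq_nonneg x0)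
    have hd2 : ((ξ T 1 - ξ T 2) / 2) ^ 2 ≤ 0 := by linarith [hV, hle]
    have hend : ξ T 1 = ξ T 2 := by
      nlinarith [sq_nonneg ((ξ T 1 - ξ T 2) / 2)]
    have hIeq : 2 * I = -(M * T) := by
      have h1 : x0 ^ 2 * Real.exp (2 * I) ≤ x0 ^ 2 * Real.exp (-(M * T)) := by
        linarith [sq_nonneg ((ξ T 1 - ξ T 2) / 2), hV, hle]
      have h3 : x0 ^ 2 * Real.exp (2 * I) = x0 ^ 2 * Real.exp (-(M * T)) :=
        le_antisymm h1 hcmp2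
      have hx2 : (x0 ^ 2) ≠ 0 := by positivity
      exact Real.exp_eq_exp.1 (mul_left_cancel₀ hx2 h3)
    refine ⟨?_, hend⟩
    -- a.e. saturation
    have hkint : IntervalIntegrable (kfun T α) volume 0 T :=
      intInt (kfun_meas hα.1) (kfun_bb hα) 0 T
    have hwint : IntervalIntegrable (fun s => kfun T α s + M/2) volume 0 T :=
      hkint.add intervalIntegrable_const
    have hwI : (∫ s in (0:ℝ)..T, (kfun T α s + M/2))
        = I + M/2 * T := by
      rw [intervalIntegral.integral_add hkint intervalIntegrable_const,
        intervalIntegral.integral_const, smul_eq_mul, sub_zero, ← hIdef]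
      ring
    have hw0 : (∫ s in (0:ℝ)..T, (kfun T α s + M/2)) = 0 := by
      rw [hwI]; linarith
    have hwnn : 0 ≤ᵐ[volume.restrict (Set.Ioc (0:ℝ) T ∪ Set.Ioc T 0)]
        (fun s => kfun T α s + M/2) := by
      refine (ae_restrict_mem (measurableSet_Ioc.union measurableSet_Ioc)).mono
        fun x hx => ?_
      have hxIoc : x ∈ Set.Ioc (0:ℝ) T := by
        rcases hx with h | h
        · exact h
        · exact absurd h (by simp [Set.Ioc_eq_empty, not_lt.2 hT.le])
      have hxI : x ∈ Set.Icc (0:ℝ) T := ⟨hxIoc.1.le, hxIoc.2⟩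
      have hM := hα.2.2 x hxI
      show (0:ℝ) ≤ kfun T α x + M / 2
      simp only [kfun, if_pos hxI]
      linarith
    have hwz := (intervalIntegral.integral_eq_zero_iff_of_nonneg_ae hwnn hwint).1 hw0
    have hae1 := (ae_restrict_iff' (measurableSet_Ioc.union measurableSet_Ioc)).1 hwz
    have h0 : ∀ᵐ t : ℝ ∂volume, t ∉ ({0} : Set ℝ) :=
      measure_eq_zero_iff_ae_notMem.1 Real.volume_singleton
    filter_upwards [hae1, h0] with t h1 h2 h3
    have ht0 : (0:ℝ) < t := lt_of_le_of_ne h3.1 (Ne.symm (by simpa using h2))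
    have hwt : kfun T α t + M/2 = 0 := h1 (Or.inl ⟨ht0, h3.2⟩)
    simp only [kfun, if_pos h3] at hwt
    linarith
  · rintro ⟨hae, hend⟩ β η hβ hη
    have hIeq : I = -(M * T) / 2 := by
      have hcongr : (∫ s in (0:ℝ)..T, kfun T α s)
          = ∫ s in (0:ℝ)..T, (-(M/2) : ℝ) := by
        rw [intervalIntegral.integral_of_le hT.le, intervalIntegral.integral_of_le hT.le]
        apply setIntegral_congr_ae measurableSet_Ioc
        filter_upwards [hae] with s hs hsIoc
        have hsI : s ∈ Set.Icc (0:ℝ) T := ⟨hsIoc.1.le, hsIoc.2⟩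
        have hM := hs hsI
        simp only [kfun, if_pos hsI]
        linarith
      rw [hIdef, hcongr, intervalIntegral.integral_const, smul_eq_mul, sub_zero]
      ring
    have hVξ : migV2 ξ T = x0 ^ 2 * Real.exp (-(M * T)) := by
      rw [hV, hend]
      have : 2 * I = -(M * T) := by rw [hIeq]; ring
      rw [this]
      ring
    rw [hVξ]
    exact hlower β η hβ hη


end
end
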